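/- arXiv:2301.00186 — 4 statements merged into one kernel-verified Lean document; each statement's English description precedes it below -/
import Mathlib

section
/- Let H be a complex Hilbert space. There exists an absolute constant C such that for every N ∈ ℕ, every strictly increasing finite sequence n_0 < n_1 < ⋯ < n_N of positive integers, and every f : ℤ → H with ∑_{v∈ℤ} ‖f(v)‖^2 < ∞, one has ∑_{i=0}^{N-1} ∑_{v ∈ ℤ} ‖ M_{n_i} f(v) − M_{n_{i+1}} f(v) ‖^2 ≤ C ∑_{v∈ℤ} ‖f(v)‖^2. (This is the case p = 2 of Theorem 1.6, equivalently Proposition 4.6, in its full operator-valued generality, since L_2 of a semifinite von Neumann algebra is a Hilbert space.) -/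
open MeasureTheory Finset ENNReal

/-- The one-sided averaging operator on `ℤ` for Hilbert-space-valued functions:
`M_n f(v) = (1/(n+1)) ∑_{y=0}^{n} f(v+y)`. -/
noncomputable def avgZH {H : Type*} [NormedAddCommGroup H] [InnerProductSpace ℂ H]
    (n : ℕ) (f : ℤ → H) : ℤ → H :=
  fun v => ((n : ℝ) + 1)⁻¹ • ∑ y ∈ Finset.range (n + 1), f (v + (y : ℤ))


noncomputable def sC (z : ℂ) (n : ℕ) : ℂ := ((n : ℂ) + 1)⁻¹ * ∑ y ∈ Finset.range (n + 1), z ^ y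

lemma natc_ne (n : ℕ) : ((n : ℂ) + 1) ≠ 0 := Nat.cast_add_one_ne_zero n

lemma sC_one (n : ℕ) : sC 1 n = 1 := by
  rw [sC]
  simp only [one_pow, Finset.sum_const, Finset.card_range, nsmul_eq_mul, mul_one]
  rw [inv_mul_eq_one₀ (natc_ne n)]
  push_cast
  ring

lemma norm_sC_le_one {z : ℂ} (hz : ‖z‖ = 1) (n : ℕ) : ‖sC z n‖ ≤ 1 := by
  have h : ‖∑ y ∈ Finset.range (n + 1), z ^ y‖ ≤ (n : ℝ) + 1 := by
    calc ‖∑ y ∈ Finset.range (n + 1), z ^ y‖ ≤ ∑ y ∈ Finset.range (n + 1), ‖z ^ y‖ :=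
      norm_sum_le _ _
    _ = (n : ℝ) + 1 := by simp [norm_pow, hz]
  have hn : (0:ℝ) < (n : ℝ) + 1 := by positivity
  rw [sC, norm_mul, norm_inv]
  have : ‖((n:ℂ) + 1)‖ = (n:ℝ) + 1 := by
    norm_cast
  rw [this]
  rw [inv_mul_le_iff₀ hn, mul_one]
  exact h

lemma sC_closed {z : ℂ} (hz1 : z ≠ 1) (n : ℕ) :
    sC z n = ((n : ℂ) + 1)⁻¹ * ((z ^ (n + 1) - 1) / (z - 1)) := by
  rw [sC, geom_sum_eq hz1]

lemma norm_pow_sub_one_le {z : ℂ} (hz : ‖z‖ = 1) (m : ℕ) : ‖z ^ m - 1‖ ≤ m * ‖z - 1‖ := by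
  induction m with
  | zero => simp
  | succ k ih =>
    have : z ^ (k+1) - 1 = z ^ k * (z - 1) + (z ^ k - 1) := by ring
    rw [this]
    calc ‖z ^ k * (z - 1) + (z ^ k - 1)‖ ≤ ‖z ^ k * (z - 1)‖ + ‖z ^ k - 1‖ := norm_add_le _ _
    _ ≤ ‖z - 1‖ + k * ‖z - 1‖ := by
        rw [norm_mul, norm_pow, hz, one_pow, one_mul]
        linarith [ih]
    _ = (k + 1 : ℕ) * ‖z - 1‖ := by push_cast; ring

lemma norm_pow_sub_pow_le {z : ℂ} (hz : ‖z‖ = 1) {a b : ℕ} (hab : a ≤ b) :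
    ‖z ^ a - z ^ b‖ ≤ ((b : ℝ) - a) * ‖z - 1‖ := by
  have hba : a + (b - a) = b := Nat.add_sub_cancel' hab
  have : z ^ a - z ^ b = -(z ^ a * (z ^ (b - a) - 1)) := by
    rw [mul_sub, ← pow_add, hba, mul_one, neg_sub]
  rw [this, norm_neg, norm_mul, norm_pow, hz, one_pow, one_mul]
  have := norm_pow_sub_one_le hz (b - a)
  calc ‖z ^ (b-a) - 1‖ ≤ ((b - a : ℕ) : ℝ) * ‖z - 1‖ := this
  _ = ((b:ℝ) - a) * ‖z - 1‖ := by
      congr 1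
      rw [Nat.cast_sub hab]

lemma gauss_sum (m : ℕ) : ∑ y ∈ Finset.range m, ((m:ℝ) - y) = m * (m + 1) / 2 := by
  induction m with
  | zero => simp
  | succ k ih =>
    have h1 : ∀ y ∈ Finset.range (k+1), (((k+1:ℕ):ℝ) - (y:ℝ)) = ((k:ℝ) - y) + 1 := by
      intro y _; push_cast; ring
    rw [Finset.sum_congr rfl h1, Finset.sum_add_distrib, Finset.sum_range_succ, Finset.sum_const,
      Finset.card_range, ih]
    push_cast
    ring

lemma sC_step (z : ℂ) (k : ℕ) :
    sC z k - sC z (k + 1) =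
      (((k:ℂ) + 1)⁻¹ * ((k:ℂ) + 2)⁻¹) * ∑ y ∈ Finset.range (k + 1), (z ^ y - z ^ (k + 1)) := by
  have h1 : ∑ y ∈ Finset.range (k + 1), (z ^ y - z ^ (k + 1))
      = (∑ y ∈ Finset.range (k + 1), z ^ y) - ((k:ℂ) + 1) * z ^ (k + 1) := by
    rw [Finset.sum_sub_distrib, Finset.sum_const, Finset.card_range, nsmul_eq_mul]
    push_cast
    ring
  have h2 : ∑ y ∈ Finset.range (k + 1 + 1), z ^ y
      = (∑ y ∈ Finset.range (k + 1), z ^ y) + z ^ (k + 1) := Finset.sum_range_succ _ _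
  have e1 : ((k:ℂ) + 1) ≠ 0 := natc_ne k
  have e2 : ((k:ℂ) + 2) ≠ 0 := by
    have := natc_ne (k+1); push_cast at this; intro h; apply this; linear_combination h
  have ecast : (((k+1:ℕ):ℂ) + 1) = ((k:ℂ) + 2) := by push_cast; ring
  rw [sC, sC, h1, h2, ecast]
  field_simp
  ring

lemma norm_sC_step_le {z : ℂ} (hz : ‖z‖ = 1) (k : ℕ) :
    ‖sC z k - sC z (k + 1)‖ ≤ ‖z - 1‖ / 2 := by
  rw [sC_step z k]
  have hb : ‖∑ y ∈ Finset.range (k + 1), (z ^ y - z ^ (k + 1))‖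
      ≤ ‖z - 1‖ * ((k+1 : ℝ) * (k+2) / 2) := by
    calc ‖∑ y ∈ Finset.range (k + 1), (z ^ y - z ^ (k + 1))‖
        ≤ ∑ y ∈ Finset.range (k + 1), ‖z ^ y - z ^ (k + 1)‖ := norm_sum_le _ _
      _ ≤ ∑ y ∈ Finset.range (k + 1), (((k+1 : ℝ)) - y) * ‖z - 1‖ := by
          apply Finset.sum_le_sum
          intro y hy
          have hy' : y ≤ k + 1 := le_of_lt (Finset.mem_range.mp hy)
          have := norm_pow_sub_pow_le hz hy'
          calc ‖z ^ y - z ^ (k+1)‖ ≤ (((k+1:ℕ):ℝ) - y) * ‖z - 1‖ := this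
            _ = (((k:ℝ)+1) - y) * ‖z - 1‖ := by push_cast; ring
      _ = (∑ y ∈ Finset.range (k + 1), (((k+1:ℕ):ℝ) - y)) * ‖z - 1‖ := by
          rw [← Finset.sum_mul]
          congr 1
          apply Finset.sum_congr rfl
          intro y _; push_cast; ring
      _ = ‖z - 1‖ * ((k+1 : ℝ) * (k+2) / 2) := by
          rw [gauss_sum (k+1)]
          push_cast
          ring
  rw [norm_mul, norm_mul, norm_inv, norm_inv]
  have n1 : ‖((k:ℂ) + 1)‖ = (k:ℝ) + 1 := by norm_cast
  have n2 : ‖((k:ℂ) + 2)‖ = (k:ℝ) + 2 := by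
    have : ((k:ℂ) + 2) = (((k+2:ℕ)):ℂ) := by push_cast; ring
    rw [this]; norm_cast
  rw [n1, n2]
  have p1 : (0:ℝ) < (k:ℝ) + 1 := by positivity
  have p2 : (0:ℝ) < (k:ℝ) + 2 := by positivity
  calc ((k:ℝ)+1)⁻¹ * ((k:ℝ)+2)⁻¹ * ‖∑ y ∈ Finset.range (k + 1), (z ^ y - z ^ (k + 1))‖
      ≤ ((k:ℝ)+1)⁻¹ * ((k:ℝ)+2)⁻¹ * (‖z - 1‖ * ((k+1 : ℝ) * (k+2) / 2)) := by
        apply mul_le_mul_of_nonneg_left hb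
        positivity
    _ = ‖z - 1‖ / 2 := by field_simp

lemma norm_sC_lip {z : ℂ} (hz : ‖z‖ = 1) {a b : ℕ} (hab : a ≤ b) :
    ‖sC z a - sC z b‖ ≤ ‖z - 1‖ / 2 * ((b:ℝ) - a) := by
  induction b, hab using Nat.le_induction with
  | base => simp
  | succ m hm ih =>
    have h1 : ‖sC z a - sC z (m+1)‖ ≤ ‖sC z a - sC z m‖ + ‖sC z m - sC z (m+1)‖ := by
      calc ‖sC z a - sC z (m+1)‖ = ‖(sC z a - sC z m) + (sC z m - sC z (m+1))‖ := by ring_nf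
        _ ≤ _ := norm_add_le _ _
    have h2 := norm_sC_step_le hz m
    have : ((m+1:ℕ):ℝ) - a = ((m:ℝ) - a) + 1 := by push_cast; ring
    rw [this]
    calc ‖sC z a - sC z (m+1)‖ ≤ ‖sC z a - sC z m‖ + ‖sC z m - sC z (m+1)‖ := h1
      _ ≤ ‖z - 1‖ / 2 * ((m:ℝ) - a) + ‖z - 1‖ / 2 := by linarith
      _ = ‖z - 1‖ / 2 * (((m:ℝ) - a) + 1) := by ring

lemma sC_diff_formula {z : ℂ} (hz1 : z ≠ 1) (a b : ℕ) :
    sC z a - sC z b =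
      ((z ^ (a+1) - z ^ (b+1)) * ((a:ℂ) + 1)⁻¹
        + (z ^ (b+1) - 1) * (((a:ℂ) + 1)⁻¹ - ((b:ℂ) + 1)⁻¹)) / (z - 1) := by
  rw [sC_closed hz1 a, sC_closed hz1 b]
  have e1 : ((a:ℂ) + 1) ≠ 0 := natc_ne a
  have e2 : ((b:ℂ) + 1) ≠ 0 := natc_ne b
  have e3 : z - 1 ≠ 0 := sub_ne_zero.mpr hz1
  field_simp
  ring

lemma inv_natc_le {a b : ℕ} (hab : a ≤ b) : ((b:ℝ) + 1)⁻¹ ≤ ((a:ℝ) + 1)⁻¹ := by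
  have pa : (0:ℝ) < (a:ℝ) + 1 := by positivity
  have h : (a:ℝ) ≤ b := by exact_mod_cast hab
  apply inv_anti₀ pa
  linarith

lemma norm_inv_diff {a b : ℕ} (hab : a ≤ b) :
    ‖((a:ℂ) + 1)⁻¹ - ((b:ℂ) + 1)⁻¹‖ = ((a:ℝ) + 1)⁻¹ - ((b:ℝ) + 1)⁻¹ := by
  have h : ((a:ℂ) + 1)⁻¹ - ((b:ℂ) + 1)⁻¹ = (((((a:ℝ) + 1)⁻¹ - ((b:ℝ) + 1)⁻¹) : ℝ) : ℂ) := by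
    push_cast
    ring
  rw [h, Complex.norm_real]
  apply abs_of_nonneg
  linarith [inv_natc_le hab]

lemma norm_sC_diff_le {z : ℂ} (hz : ‖z‖ = 1) (hz1 : z ≠ 1) {a b : ℕ} (hab : a ≤ b) :
    ‖sC z a - sC z b‖ ≤
      (‖z ^ (a+1) - z ^ (b+1)‖ * ((a:ℝ) + 1)⁻¹
        + 2 * (((a:ℝ) + 1)⁻¹ - ((b:ℝ) + 1)⁻¹)) / ‖z - 1‖ := by
  have hd : (0:ℝ) < ‖z - 1‖ := by
    rw [norm_pos_iff]
    exact sub_ne_zero.mpr hz1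
  rw [sC_diff_formula hz1 a b, norm_div]
  gcongr
  calc ‖(z ^ (a+1) - z ^ (b+1)) * ((a:ℂ) + 1)⁻¹
        + (z ^ (b+1) - 1) * (((a:ℂ) + 1)⁻¹ - ((b:ℂ) + 1)⁻¹)‖
      ≤ ‖(z ^ (a+1) - z ^ (b+1)) * ((a:ℂ) + 1)⁻¹‖
        + ‖(z ^ (b+1) - 1) * (((a:ℂ) + 1)⁻¹ - ((b:ℂ) + 1)⁻¹)‖ := norm_add_le _ _
    _ ≤ ‖z ^ (a+1) - z ^ (b+1)‖ * ((a:ℝ) + 1)⁻¹ + 2 * (((a:ℝ) + 1)⁻¹ - ((b:ℝ) + 1)⁻¹) := by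
        rw [norm_mul, norm_mul, norm_inv_diff hab]
        have n1 : ‖((a:ℂ) + 1)⁻¹‖ = ((a:ℝ) + 1)⁻¹ := by
          rw [norm_inv]; norm_cast
        rw [n1]
        have h2 : ‖z ^ (b+1) - 1‖ ≤ 2 := by
          calc ‖z ^ (b+1) - 1‖ ≤ ‖z ^ (b+1)‖ + ‖(1:ℂ)‖ := norm_sub_le _ _
            _ = 2 := by rw [norm_pow, hz]; norm_num
        have h3 : (0:ℝ) ≤ ((a:ℝ) + 1)⁻¹ - ((b:ℝ) + 1)⁻¹ := by linarith [inv_natc_le hab]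
        nlinarith [norm_nonneg (z ^ (b+1) - 1)]

lemma norm_sC_amp {z : ℂ} (hz : ‖z‖ = 1) (hz1 : z ≠ 1) {a b : ℕ} (hab : a ≤ b) :
    ‖sC z a - sC z b‖ ≤ 4 / (‖z - 1‖ * ((a:ℝ) + 1)) := by
  have hd : (0:ℝ) < ‖z - 1‖ := by
    rw [norm_pos_iff]; exact sub_ne_zero.mpr hz1
  have pa : (0:ℝ) < (a:ℝ) + 1 := by positivity
  have hx : ‖z ^ (a+1) - z ^ (b+1)‖ ≤ 2 := by
    calc ‖z ^ (a+1) - z ^ (b+1)‖ ≤ ‖z ^ (a+1)‖ + ‖z ^ (b+1)‖ := norm_sub_le _ _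
      _ = 2 := by rw [norm_pow, norm_pow, hz]; norm_num
  have key := norm_sC_diff_le hz hz1 hab
  have hb' : (0:ℝ) < ((b:ℝ) + 1)⁻¹ := by positivity
  calc ‖sC z a - sC z b‖
      ≤ (‖z ^ (a+1) - z ^ (b+1)‖ * ((a:ℝ) + 1)⁻¹
        + 2 * (((a:ℝ) + 1)⁻¹ - ((b:ℝ) + 1)⁻¹)) / ‖z - 1‖ := key
    _ ≤ (2 * ((a:ℝ) + 1)⁻¹ + 2 * ((a:ℝ) + 1)⁻¹) / ‖z - 1‖ := by
        gcongr ?_ / _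
        have h3 := inv_natc_le hab
        have h4 : (0:ℝ) ≤ ((a:ℝ) + 1)⁻¹ := inv_nonneg.mpr pa.le
        nlinarith [hb'.le, norm_nonneg (z ^ (a+1) - z ^ (b+1))]
    _ = 4 / (‖z - 1‖ * ((a:ℝ) + 1)) := by
        field_simp
        ring

lemma norm_sC_mid_sq {z : ℂ} (hz : ‖z‖ = 1) (hz1 : z ≠ 1) {a b : ℕ} (hab : a ≤ b)
    (hb2 : (b:ℝ) + 1 ≤ 2 * ((a:ℝ) + 1)) (h4 : 4 ≤ ‖z - 1‖ * ((a:ℝ) + 1)) :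
    ‖sC z a - sC z b‖ ^ 2 ≤ 8 * ((b:ℝ) - a) / (‖z - 1‖ * ((a:ℝ) + 1) ^ 2) := by
  set d := ‖z - 1‖ with hdd
  have hd : (0:ℝ) < d := by
    rw [hdd, norm_pos_iff]; exact sub_ne_zero.mpr hz1
  have pa : (0:ℝ) < (a:ℝ) + 1 := by positivity
  have pb : (0:ℝ) < (b:ℝ) + 1 := by positivity
  have hg : (0:ℝ) ≤ (b:ℝ) - a := by
    have : (a:ℝ) ≤ b := by exact_mod_cast hab
    linarith
  set A := (a:ℝ) + 1 with hA
  set g := (b:ℝ) - (a:ℝ) with hg'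
  set X := ‖z ^ (a+1) - z ^ (b+1)‖ with hX
  have hX2 : X ≤ 2 := by
    rw [hX]
    calc ‖z ^ (a+1) - z ^ (b+1)‖ ≤ ‖z ^ (a+1)‖ + ‖z ^ (b+1)‖ := norm_sub_le _ _
      _ = 2 := by rw [norm_pow, norm_pow, hz]; norm_num
  have hXg : X ≤ d * g := by
    have := norm_pow_sub_pow_le hz (Nat.add_le_add_right hab 1)
    rw [hX, hg', hdd]
    calc ‖z ^ (a+1) - z ^ (b+1)‖ ≤ (((b+1:ℕ):ℝ) - ((a+1:ℕ):ℝ)) * ‖z - 1‖ := this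
      _ = ‖z - 1‖ * ((b:ℝ) - a) := by push_cast; ring
  have hXpos : 0 ≤ X := norm_nonneg _
  have hinv : ((a:ℝ) + 1)⁻¹ - ((b:ℝ) + 1)⁻¹ ≤ g / (A * A) := by
    rw [hg', hA]
    have heq : ((a:ℝ) + 1)⁻¹ - ((b:ℝ) + 1)⁻¹ = ((b:ℝ) - a) / (((a:ℝ)+1) * ((b:ℝ)+1)) := by
      field_simp
      ring
    rw [heq]
    gcongr
  have key := norm_sC_diff_le hz hz1 hab
  have step1 : ‖sC z a - sC z b‖ ≤ (X + 2 * (g / A)) / (d * A) := by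
    calc ‖sC z a - sC z b‖
        ≤ (X * A⁻¹ + 2 * (((a:ℝ) + 1)⁻¹ - ((b:ℝ) + 1)⁻¹)) / d := key
      _ ≤ (X * A⁻¹ + 2 * (g / (A * A))) / d := by gcongr
      _ = (X + 2 * (g / A)) / (d * A) := by
          field_simp
  set u := g / A with hu
  have hu0 : 0 ≤ u := by rw [hu]; positivity
  have hu2 : u ≤ 2 := by
    rw [hu, div_le_iff₀ pa]
    rw [hg', hA]
    linarith
  have hu3 : u ≤ d * g / 4 := by
    rw [hu, div_le_div_iff₀ pa (by norm_num : (0:ℝ) < 4)]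
    calc g * 4 ≤ g * (d * A) := by
          apply mul_le_mul_of_nonneg_left h4 hg
      _ = d * g * A := by ring
  have hnum : (X + 2 * u) ^ 2 ≤ 8 * (d * g) := by
    have hdg : 0 ≤ d * g := by positivity
    have m1 : u * X ≤ (d * g / 4) * 2 := mul_le_mul hu3 hX2 hXpos (by positivity)
    have m2 : u * u ≤ (d * g / 4) * 2 := mul_le_mul hu3 hu2 hu0 (by positivity)
    nlinarith [hXg, hXpos, hX2]
  have hda : (0:ℝ) < d * A := by positivity
  calc ‖sC z a - sC z b‖ ^ 2 ≤ ((X + 2 * u) / (d * A)) ^ 2 := by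
        apply pow_le_pow_left₀ (norm_nonneg _) step1
    _ = (X + 2 * u) ^ 2 / (d * A) ^ 2 := div_pow _ _ _
    _ ≤ 8 * (d * g) / (d * A) ^ 2 := by gcongr
    _ = 8 * g / (d * A ^ 2) := by
        field_simp

lemma pairwise_disj_Ico {n : ℕ → ℕ} (hn : StrictMono n) {i j : ℕ} (hij : i ≠ j) :
    Disjoint (Finset.Ico (n i) (n (i+1))) (Finset.Ico (n j) (n (j+1))) := by
  rcases hij.lt_or_gt with h | h
  · rw [Finset.disjoint_left]
    intro x hx hx'
    rw [Finset.mem_Ico] at hx hx'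
    have : n (i+1) ≤ n j := hn.monotone (by omega)
    omega
  · rw [Finset.disjoint_left]
    intro x hx hx'
    rw [Finset.mem_Ico] at hx hx'
    have : n (j+1) ≤ n i := hn.monotone (by omega)
    omega

lemma sum_Ico_nested {n : ℕ → ℕ} (hn : StrictMono n) (s : Finset ℕ) (w : ℕ → ℝ)
    (hw : ∀ v, 0 ≤ w v) {L U : ℕ} (hs : ∀ i ∈ s, L ≤ n i ∧ n (i+1) ≤ U) :
    ∑ i ∈ s, ∑ v ∈ Finset.Ico (n i) (n (i+1)), w v ≤ ∑ v ∈ Finset.Ico L U, w v := by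
  rw [← Finset.sum_biUnion]
  · apply Finset.sum_le_sum_of_subset_of_nonneg
    · intro x hx
      rw [Finset.mem_biUnion] at hx
      obtain ⟨i, hi, hxi⟩ := hx
      rw [Finset.mem_Ico] at hxi ⊢
      exact ⟨le_trans (hs i hi).1 hxi.1, lt_of_lt_of_le hxi.2 (hs i hi).2⟩
    · intro v _ _
      exact hw v
  · intro i _ j _ hij
    exact pairwise_disj_Ico hn hij

lemma inv_sq_tail {m : ℕ} (hm : 1 ≤ m) : ∀ {M : ℕ}, m ≤ M →
    ∑ v ∈ Finset.Ico m M, (((v:ℝ)+1)^2)⁻¹ ≤ (m:ℝ)⁻¹ - (M:ℝ)⁻¹ := by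
  intro M hM
  induction M, hM using Nat.le_induction with
  | base => simp
  | succ M hM ih =>
    rw [Finset.sum_Ico_succ_top hM]
    have hM1 : (1:ℝ) ≤ (M:ℝ) := by exact_mod_cast le_trans hm hM
    have h1 : (((M:ℝ)+1)^2)⁻¹ ≤ (M:ℝ)⁻¹ - ((M:ℝ)+1)⁻¹ := by
      rw [inv_le_iff_one_le_mul₀ (by positivity)]
      have : ((M:ℝ)⁻¹ - ((M:ℝ)+1)⁻¹) = ((M:ℝ)*((M:ℝ)+1))⁻¹ := by
        field_simp
        ring
      rw [this, inv_mul_eq_div, le_div_iff₀ (by positivity : (0:ℝ) < (M:ℝ)*((M:ℝ)+1))]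
      nlinarith
    have hcast : (((M+1:ℕ)):ℝ) = (M:ℝ)+1 := by push_cast; ring
    rw [hcast]
    linarith

lemma doubling_sum (w : ℕ → ℝ) (s : Finset ℕ) :
    ∀ (W : ℝ), 0 < W → (∀ i ∈ s, W ≤ w i) → (∀ i ∈ s, ∀ j ∈ s, i < j → 2 * w i ≤ w j) →
    ∑ i ∈ s, ((w i)^2)⁻¹ ≤ 4 / (3 * W^2) := by
  induction s using Finset.induction_on_min with
  | empty =>
    intro W hW _ _
    simp
    positivity
  | insert a s ha ih =>
    intro W hW h1 h2
    have has : a ∉ s := fun h => lt_irrefl a (ha a h)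
    rw [Finset.sum_insert has]
    have hWa : W ≤ w a := h1 a (Finset.mem_insert_self a s)
    have ih' := ih (2 * W) (by linarith)
      (fun i hi => by
        have := h2 a (Finset.mem_insert_self a s) i (Finset.mem_insert_of_mem hi) (ha i hi)
        have := h1 a (Finset.mem_insert_self a s)
        linarith)
      (fun i hi j hj hij => h2 i (Finset.mem_insert_of_mem hi) j (Finset.mem_insert_of_mem hj) hij)
    have hterm : ((w a)^2)⁻¹ ≤ (W^2)⁻¹ := by
      apply inv_anti₀ (by positivity)
      nlinarith
    have : 4 / (3 * (2*W)^2) = (W^2)⁻¹ / 3 := by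
      field_simp
      ring
    rw [this] at ih'
    have hW2 : (0:ℝ) < W^2 := by positivity
    calc ((w a)^2)⁻¹ + ∑ i ∈ s, ((w i)^2)⁻¹ ≤ (W^2)⁻¹ + (W^2)⁻¹ / 3 := by linarith
      _ = 4 / (3 * W^2) := by field_simp; ring

lemma pointwise_sq_bound {z : ℂ} (hz : ‖z‖ = 1) (N : ℕ) (n : ℕ → ℕ) (hn : StrictMono n) :
    ∑ i ∈ Finset.range N, ‖sC z (n i) - sC z (n (i+1))‖ ^ 2 ≤ 30 := by
  by_cases hz1 : z = 1
  · subst hz1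
    simp [sC_one]
  -- basic quantities
  set d := ‖z - 1‖ with hdd
  have hd : (0:ℝ) < d := by rw [hdd, norm_pos_iff]; exact sub_ne_zero.mpr hz1
  have hd2 : d ≤ 2 := by
    rw [hdd]
    calc ‖z - 1‖ ≤ ‖z‖ + ‖(1:ℂ)‖ := norm_sub_le _ _
      _ = 2 := by rw [hz]; norm_num
  set K := Nat.ceil (4 / d) with hKdef
  have hK4 : 4 ≤ d * K := by
    have h := Nat.le_ceil (4 / d)
    rw [← hKdef] at h
    rw [div_le_iff₀ hd] at h
    linarith [mul_comm d (K:ℝ)]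
  have hK1 : 1 ≤ K := by
    rw [hKdef]
    apply Nat.one_le_ceil_iff.mpr
    positivity
  have hKpos : (0:ℝ) < (K:ℝ) := by exact_mod_cast Nat.lt_of_lt_of_le Nat.zero_lt_one hK1
  have hK6 : (K:ℝ) ≤ 6 / d := by
    have h := Nat.ceil_lt_add_one (by positivity : (0:ℝ) ≤ 4 / d)
    rw [← hKdef] at h
    have h2 : (1:ℝ) ≤ 2 / d := by
      rw [le_div_iff₀ hd]; linarith
    have : 4 / d + 1 ≤ 6 / d := by
      have : 4 / d + 2 / d = 6 / d := by ring
      linarith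
    linarith
  -- the summand
  set q : ℕ → ℝ := fun i => ‖sC z (n i) - sC z (n (i+1))‖ ^ 2 with hq
  have hq0 : ∀ i, 0 ≤ q i := fun i => sq_nonneg _
  have hq4 : ∀ i, q i ≤ 4 := by
    intro i
    have h1 : ‖sC z (n i) - sC z (n (i+1))‖ ≤ 2 := by
      calc ‖sC z (n i) - sC z (n (i+1))‖ ≤ ‖sC z (n i)‖ + ‖sC z (n (i+1))‖ := norm_sub_le _ _
        _ ≤ 2 := by linarith [norm_sC_le_one hz (n i), norm_sC_le_one hz (n (i+1))]
    calc q i = ‖sC z (n i) - sC z (n (i+1))‖ ^ 2 := rfl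
      _ ≤ 2 ^ 2 := by apply pow_le_pow_left₀ (norm_nonneg _) h1
      _ = 4 := by norm_num
  have hmono : ∀ i, n i < n (i+1) := fun i => hn (Nat.lt_succ_self i)
  -- split the sum
  rw [← Finset.sum_filter_add_sum_filter_not (Finset.range N) (fun i => K < n i) q]
  have splitB := Finset.sum_filter_add_sum_filter_not
    ((Finset.range N).filter (fun i => ¬ K < n i)) (fun i => n (i+1) ≤ K) q
  have splitA := Finset.sum_filter_add_sum_filter_not
    ((Finset.range N).filter (fun i => K < n i)) (fun i => n (i+1) ≤ 2 * n i + 1) q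
  rw [← splitB, ← splitA]
  set B1 := (((Finset.range N).filter (fun i => ¬ K < n i)).filter (fun i => n (i+1) ≤ K))
  set B2 := (((Finset.range N).filter (fun i => ¬ K < n i)).filter (fun i => ¬ n (i+1) ≤ K))
  set A1 := (((Finset.range N).filter (fun i => K < n i)).filter (fun i => n (i+1) ≤ 2 * n i + 1))
  set A2 := (((Finset.range N).filter (fun i => K < n i)).filter
    (fun i => ¬ n (i+1) ≤ 2 * n i + 1))
  -- Bound on B1
  have hB1 : ∑ i ∈ B1, q i ≤ 9 := by
    have hterm : ∀ i ∈ B1, q i ≤ d ^ 2 / 4 * (K:ℝ) *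
        ∑ v ∈ Finset.Ico (n i) (n (i+1)), (1:ℝ) := by
      intro i hi
      simp only [B1, Finset.mem_filter] at hi
      have hab : n i ≤ n (i+1) := (hmono i).le
      have hlip := norm_sC_lip hz hab
      have hg : ((n (i+1)):ℝ) - n i ≤ (K:ℝ) := by
        have h1 : n (i+1) ≤ K := hi.2
        have : ((n (i+1)):ℝ) ≤ (K:ℝ) := by exact_mod_cast h1
        have : (0:ℝ) ≤ (n i : ℝ) := by positivity
        linarith
      have hgpos : (0:ℝ) ≤ ((n (i+1)):ℝ) - n i := by
        have : ((n i):ℝ) ≤ n (i+1) := by exact_mod_cast hab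
        linarith
      have hsum1 : ∑ v ∈ Finset.Ico (n i) (n (i+1)), (1:ℝ) = ((n (i+1)):ℝ) - n i := by
        rw [Finset.sum_const, Nat.card_Ico, nsmul_eq_mul, mul_one]
        rw [Nat.cast_sub hab]
      rw [hsum1]
      calc q i = ‖sC z (n i) - sC z (n (i+1))‖ ^ 2 := rfl
        _ ≤ (d / 2 * (((n (i+1)):ℝ) - n i)) ^ 2 := by
            apply pow_le_pow_left₀ (norm_nonneg _) hlip
        _ = d ^ 2 / 4 * (((n (i+1)):ℝ) - n i) * (((n (i+1)):ℝ) - n i) := by ring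
        _ ≤ d ^ 2 / 4 * (K:ℝ) * (((n (i+1)):ℝ) - n i) := by
            apply mul_le_mul_of_nonneg_right ?_ hgpos
            apply mul_le_mul_of_nonneg_left hg (by positivity)
    calc ∑ i ∈ B1, q i ≤ ∑ i ∈ B1, d ^ 2 / 4 * (K:ℝ) *
        ∑ v ∈ Finset.Ico (n i) (n (i+1)), (1:ℝ) := Finset.sum_le_sum hterm
      _ = d ^ 2 / 4 * (K:ℝ) * ∑ i ∈ B1, ∑ v ∈ Finset.Ico (n i) (n (i+1)), (1:ℝ) := by
          rw [Finset.mul_sum]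
      _ ≤ d ^ 2 / 4 * (K:ℝ) * ∑ v ∈ Finset.Ico 0 K, (1:ℝ) := by
          apply mul_le_mul_of_nonneg_left ?_ (by positivity)
          apply sum_Ico_nested hn B1 _ (fun v => zero_le_one)
          intro i hi
          simp only [B1, Finset.mem_filter] at hi
          exact ⟨Nat.zero_le _, hi.2⟩
      _ = d ^ 2 / 4 * (K:ℝ) * (K:ℝ) := by
          rw [Finset.sum_const, Nat.card_Ico, nsmul_eq_mul, mul_one, Nat.sub_zero]
      _ ≤ 9 := by
          have hdK : d * (K:ℝ) ≤ 6 := by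
            calc d * (K:ℝ) ≤ d * (6 / d) := by
                  apply mul_le_mul_of_nonneg_left hK6 hd.le
              _ = 6 := by field_simp
          nlinarith [mul_nonneg hd.le hKpos.le]
  -- Bound on B2
  have hB2 : ∑ i ∈ B2, q i ≤ 4 := by
    have hcard : B2.card ≤ 1 := by
      rw [Finset.card_le_one]
      intro i hi j hj
      simp only [B2, Finset.mem_filter] at hi hj
      by_contra hij
      rcases Nat.lt_or_ge i j with h | h
      · have : n (i+1) ≤ n j := hn.monotone (by omega)
        omega
      · have hji : j < i := by omega
        have : n (j+1) ≤ n i := hn.monotone (by omega)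
        omega
    calc ∑ i ∈ B2, q i ≤ ∑ i ∈ B2, 4 := Finset.sum_le_sum (fun i _ => hq4 i)
      _ = B2.card * 4 := by rw [Finset.sum_const, nsmul_eq_mul]
      _ ≤ 1 * 4 := by
          apply mul_le_mul_of_nonneg_right ?_ (by norm_num)
          exact_mod_cast hcard
      _ = 4 := by norm_num
  -- Bound on A1
  have hA1 : ∑ i ∈ A1, q i ≤ 8 := by
    have hterm : ∀ i ∈ A1, q i ≤ 32 / d *
        ∑ v ∈ Finset.Ico (n i) (n (i+1)), (((v:ℝ)+1)^2)⁻¹ := by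
      intro i hi
      simp only [A1, Finset.mem_filter] at hi
      obtain ⟨⟨_, hKa⟩, hb2a⟩ := hi
      set a := n i
      set b := n (i+1)
      have hab : a ≤ b := (hmono i).le
      have hcast : (a:ℝ) + 1 ≥ (K:ℝ) := by
        have : (K:ℝ) ≤ (a:ℝ) := by exact_mod_cast hKa.le
        linarith
      have h4 : 4 ≤ d * ((a:ℝ) + 1) := by
        calc (4:ℝ) ≤ d * K := hK4
          _ ≤ d * ((a:ℝ)+1) := by apply mul_le_mul_of_nonneg_left hcast hd.le
      have hb2 : (b:ℝ) + 1 ≤ 2 * ((a:ℝ) + 1) := by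
        have : (b:ℝ) ≤ 2 * (a:ℝ) + 1 := by exact_mod_cast hb2a
        linarith
      have hmid := norm_sC_mid_sq hz hz1 hab hb2 h4
      have hlower : ((b:ℝ) - a) / (4 * ((a:ℝ)+1)^2)
          ≤ ∑ v ∈ Finset.Ico a b, (((v:ℝ)+1)^2)⁻¹ := by
        have hterm2 : ∀ v ∈ Finset.Ico a b, (( 2 * ((a:ℝ)+1))^2)⁻¹ ≤ (((v:ℝ)+1)^2)⁻¹ := by
          intro v hv
          rw [Finset.mem_Ico] at hv
          apply inv_anti₀ (by positivity)
          have h1 : (v:ℝ) + 1 ≤ 2 * ((a:ℝ)+1) := by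
            have : (v:ℝ) < (b:ℝ) := by exact_mod_cast hv.2
            linarith
          have h0 : (0:ℝ) ≤ (v:ℝ) + 1 := by positivity
          nlinarith
        calc ((b:ℝ) - a) / (4 * ((a:ℝ)+1)^2)
            = ∑ v ∈ Finset.Ico a b, ((2 * ((a:ℝ)+1))^2)⁻¹ := by
              rw [Finset.sum_const, Nat.card_Ico, nsmul_eq_mul]
              rw [Nat.cast_sub hab]
              have h22 : (2 * ((a:ℝ)+1))^2 = 4 * ((a:ℝ)+1)^2 := by ring
              rw [h22, div_eq_mul_inv]
          _ ≤ ∑ v ∈ Finset.Ico a b, (((v:ℝ)+1)^2)⁻¹ := Finset.sum_le_sum hterm2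
      calc q i ≤ 8 * ((b:ℝ) - a) / (d * ((a:ℝ) + 1) ^ 2) := hmid
        _ = 32 / d * (((b:ℝ) - a) / (4 * ((a:ℝ)+1)^2)) := by
            field_simp
            ring
        _ ≤ 32 / d * ∑ v ∈ Finset.Ico a b, (((v:ℝ)+1)^2)⁻¹ := by
            apply mul_le_mul_of_nonneg_left hlower (by positivity)
    have htail : ∑ i ∈ A1, ∑ v ∈ Finset.Ico (n i) (n (i+1)), (((v:ℝ)+1)^2)⁻¹ ≤ d / 4 := by
      set M := max (K+1) (n N) with hM
      have h1 : ∑ i ∈ A1, ∑ v ∈ Finset.Ico (n i) (n (i+1)), (((v:ℝ)+1)^2)⁻¹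
          ≤ ∑ v ∈ Finset.Ico (K+1) M, (((v:ℝ)+1)^2)⁻¹ := by
        apply sum_Ico_nested hn A1 _ (fun v => by positivity)
        intro i hi
        simp only [A1, Finset.mem_filter, Finset.mem_range] at hi
        constructor
        · omega
        · have : n (i+1) ≤ n N := hn.monotone (by omega)
          omega
      have h2 : ∑ v ∈ Finset.Ico (K+1) M, (((v:ℝ)+1)^2)⁻¹ ≤ ((K+1:ℕ):ℝ)⁻¹ - (M:ℝ)⁻¹ :=
        inv_sq_tail (by omega) (le_max_left _ _)
      have h3 : ((K+1:ℕ):ℝ)⁻¹ ≤ d / 4 := by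
        rw [inv_le_iff_one_le_mul₀ (by positivity)]
        have hc : (K:ℝ) + 1 ≤ ((K+1:ℕ):ℝ) := by push_cast; linarith
        calc (1:ℝ) ≤ d / 4 * ((K:ℝ)+1) := by
              rw [div_mul_eq_mul_div, le_div_iff₀ (by norm_num : (0:ℝ) < 4)]
              nlinarith
          _ ≤ d / 4 * ((K+1:ℕ):ℝ) := by
              apply mul_le_mul_of_nonneg_left hc (by positivity)
      have hMpos : (0:ℝ) ≤ (M:ℝ)⁻¹ := by positivity
      linarith
    calc ∑ i ∈ A1, q i
        ≤ ∑ i ∈ A1, 32 / d * ∑ v ∈ Finset.Ico (n i) (n (i+1)), (((v:ℝ)+1)^2)⁻¹ :=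
          Finset.sum_le_sum hterm
      _ = 32 / d * ∑ i ∈ A1, ∑ v ∈ Finset.Ico (n i) (n (i+1)), (((v:ℝ)+1)^2)⁻¹ := by
          rw [Finset.mul_sum]
      _ ≤ 32 / d * (d / 4) := by
          apply mul_le_mul_of_nonneg_left htail (by positivity)
      _ = 8 := by
          field_simp
          norm_num
  -- Bound on A2
  have hA2 : ∑ i ∈ A2, q i ≤ 2 := by
    set w : ℕ → ℝ := fun i => (n i : ℝ) + 1 with hw
    have hterm : ∀ i ∈ A2, q i ≤ 16 / d^2 * ((w i)^2)⁻¹ := by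
      intro i hi
      simp only [A2, Finset.mem_filter] at hi
      have hab : n i ≤ n (i+1) := (hmono i).le
      have hamp := norm_sC_amp hz hz1 hab
      calc q i = ‖sC z (n i) - sC z (n (i+1))‖ ^ 2 := rfl
        _ ≤ (4 / (d * ((n i : ℝ) + 1))) ^ 2 := by
            apply pow_le_pow_left₀ (norm_nonneg _) hamp
        _ = 16 / d^2 * ((w i)^2)⁻¹ := by
            rw [hw]
            field_simp
            ring
    have hdbl : ∑ i ∈ A2, ((w i)^2)⁻¹ ≤ 4 / (3 * (K:ℝ)^2) := by
      apply doubling_sum w A2 (K:ℝ) hKpos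
      · intro i hi
        simp only [A2, Finset.mem_filter] at hi
        have : (K:ℝ) ≤ (n i : ℝ) := by exact_mod_cast hi.1.2.le
        rw [hw]
        simp only
        linarith
      · intro i hi j hj hij
        simp only [A2, Finset.mem_filter] at hi hj
        have h1 : 2 * n i + 1 < n (i+1) := by omega
        have h2 : n (i+1) ≤ n j := hn.monotone (by omega)
        rw [hw]
        simp only
        have : (2 * n i + 2 : ℕ) ≤ n j := by omega
        have hc : ((2 * n i + 2 : ℕ):ℝ) ≤ (n j : ℝ) := by exact_mod_cast this
        push_cast at hc
        linarith
    calc ∑ i ∈ A2, q i ≤ ∑ i ∈ A2, 16 / d^2 * ((w i)^2)⁻¹ := Finset.sum_le_sum hterm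
      _ = 16 / d^2 * ∑ i ∈ A2, ((w i)^2)⁻¹ := by rw [Finset.mul_sum]
      _ ≤ 16 / d^2 * (4 / (3 * (K:ℝ)^2)) := by
          apply mul_le_mul_of_nonneg_left hdbl (by positivity)
      _ = 64 / (3 * (d * K)^2) := by
          field_simp
          ring
      _ ≤ 2 := by
          rw [div_le_iff₀ (by positivity)]
          nlinarith
  linarith

noncomputable def avgZH' {H : Type*} [NormedAddCommGroup H] [InnerProductSpace ℂ H]
    (n : ℕ) (f : ℤ → H) : ℤ → H :=
  fun v => ((n : ℝ) + 1)⁻¹ • ∑ y ∈ Finset.range (n + 1), f (v + (y : ℤ))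

section Scalar

open MeasureTheory AddCircle ENNReal NNReal

instance fact01 : Fact ((0:ℝ) < 1) := ⟨one_pos⟩

lemma norm_fourier_apply (k : ℤ) (x : AddCircle (1:ℝ)) : ‖(fourier k x : ℂ)‖ = 1 := by
  rw [fourier_apply, Circle.norm_coe]

lemma fourier_neg_pow (y : ℕ) (x : AddCircle (1:ℝ)) :
    fourier (-(y:ℤ)) x = (fourier (-1) x) ^ y := by
  induction y with
  | zero => simpa using fourier_zero
  | succ k ih =>
    have h : (-(((k:ℤ)+1)) : ℤ) = (-(k:ℤ)) + (-1) := by ring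
    have : fourier (-((k+1:ℕ):ℤ)) x = fourier ((-(k:ℤ)) + (-1)) x := by
      congr 1
      push_cast
      ring
    rw [this, fourier_add, ih, pow_succ]

/-- The multiplier function of the averaging operator. -/
noncomputable def Pmul (m : ℕ) : AddCircle (1:ℝ) → ℂ := fun x => sC (fourier (-1) x) m

lemma Pmul_cont (m : ℕ) : Continuous (Pmul m) := by
  unfold Pmul sC
  apply Continuous.mul continuous_const
  apply continuous_finset_sum
  intro y _
  exact (map_continuous (fourier (-1))).pow y

lemma Pmul_norm_le (m : ℕ) (x : AddCircle (1:ℝ)) : ‖Pmul m x‖ ≤ 1 :=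
  norm_sC_le_one (norm_fourier_apply (-1) x) m

lemma scalar_key (N : ℕ) (n : ℕ → ℕ) (hn : StrictMono n) (f : ℤ → ℂ)
    (hf : Summable fun v => ‖f v‖ ^ 2) :
    (∀ i : ℕ, Summable fun v : ℤ => ‖avgZH' (n i) f v - avgZH' (n (i+1)) f v‖ ^ 2) ∧
    ∑ i ∈ Finset.range N, ∑' v : ℤ, ‖avgZH' (n i) f v - avgZH' (n (i+1)) f v‖ ^ 2
      ≤ 30 * ∑' v : ℤ, ‖f v‖ ^ 2 := by
  classical
  set μ := @haarAddCircle (1:ℝ) fact01 with hμ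
  -- the ℓ² element
  have hexp : ∀ g : ℤ → ℂ, (fun v => ‖g v‖ ^ ((2:ℝ≥0∞)).toReal) = fun v => ‖g v‖ ^ 2 := by
    intro g
    funext v
    rw [ENNReal.toReal_ofNat]
    rw [show ((2:ℝ)) = ((2:ℕ):ℝ) by norm_num, Real.rpow_natCast]
  have hmem : Memℓp f 2 := memℓp_gen (by rw [hexp]; exact hf)
  set g : lp (fun _ : ℤ => ℂ) 2 := ⟨f, hmem⟩ with hg
  set F : Lp ℂ 2 μ := fourierBasis.repr.symm g with hF
  have hFc : ∀ v : ℤ, fourierCoeff (F : AddCircle (1:ℝ) → ℂ) v = f v := by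
    intro v
    rw [← fourierBasis_repr]
    rw [hF, LinearIsometryEquiv.apply_symm_apply]
  have hFmeas := Lp.aestronglyMeasurable F
  have hFmem : MemLp (F : AddCircle (1:ℝ) → ℂ) 2 μ := Lp.memLp F
  have hFsq : Integrable (fun x => ‖(F : AddCircle (1:ℝ) → ℂ) x‖ ^ 2) μ :=
    (memLp_two_iff_integrable_sq_norm hFmeas).mp hFmem
  have hFint : Integrable (F : AddCircle (1:ℝ) → ℂ) μ :=
    hFmem.integrable (by norm_num)
  -- the multiplied functions
  set Q : ℕ → AddCircle (1:ℝ) → ℂ := fun m x => Pmul m x * F x with hQ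
  have hQmem : ∀ m, MemLp (Q m) 2 μ := by
    intro m
    have hPtop : MemLp (Pmul m) ⊤ μ :=
      memLp_top_of_bound (Pmul_cont m).aestronglyMeasurable 1
        (Filter.Eventually.of_forall (Pmul_norm_le m))
    have := hFmem.smul (r := 2) hPtop
    have heq : (Pmul m • (F : AddCircle (1:ℝ) → ℂ)) = Q m := by
      funext x
      simp [hQ, Pi.smul_apply, smul_eq_mul]
    rwa [heq] at this
  set G : ℕ → Lp ℂ 2 μ := fun m => (hQmem m).toLp (Q m) with hG
  -- Fourier coefficients of G m are the averages
  have hkey : ∀ (m : ℕ) (v : ℤ),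
      fourierCoeff ((G m : Lp ℂ 2 μ) : AddCircle (1:ℝ) → ℂ) v = avgZH' m f v := by
    intro m v
    have h1 : fourierCoeff ((G m : Lp ℂ 2 μ) : AddCircle (1:ℝ) → ℂ) v
        = fourierCoeff (Q m) v := by
      unfold fourierCoeff
      apply integral_congr_ae
      filter_upwards [MemLp.coeFn_toLp (hQmem m)] with x hx
      simp only [hG]
      rw [hx]
    rw [h1]
    -- integrability of each term
    have hInt : ∀ y : ℕ, Integrable (fun t => fourier (-(v+(y:ℤ))) t • (F : AddCircle (1:ℝ) → ℂ) t) μ := by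
      intro y
      have := hFint.bdd_mul (c := 1) (map_continuous (fourier (-(v+(y:ℤ))))).aestronglyMeasurable
        (Filter.Eventually.of_forall fun x => le_of_eq (norm_fourier_apply _ x))
      simpa [smul_eq_mul] using this
    have havg : avgZH' m f v
        = ((m:ℝ)+1)⁻¹ • ∑ y ∈ Finset.range (m+1),
            ∫ t, fourier (-(v+(y:ℤ))) t • (F : AddCircle (1:ℝ) → ℂ) t ∂μ := by
      unfold avgZH'
      congr 1
      apply Finset.sum_congr rfl
      intro y _
      rw [← hFc (v + (y:ℤ))]
      rfl
    rw [havg, ← integral_finset_sum _ (fun y _ => hInt y), ← integral_smul]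
    unfold fourierCoeff
    apply integral_congr_ae
    apply Filter.Eventually.of_forall
    intro t
    have hsplit : ∀ y : ℕ, fourier (-(v+(y:ℤ))) t = fourier (-v) t * (fourier (-1) t) ^ y := by
      intro y
      have : (-(v + (y:ℤ))) = (-v) + (-(y:ℤ)) := by ring
      rw [this, fourier_add, fourier_neg_pow]
    simp only [hsplit, smul_eq_mul]
    have hre : ∀ y ∈ Finset.range (m+1),
        fourier (-v) t * (fourier (-1) t) ^ y * (F : AddCircle (1:ℝ) → ℂ) t
        = (fourier (-v) t * (F : AddCircle (1:ℝ) → ℂ) t) * (fourier (-1) t) ^ y := by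
      intro y _
      ring
    rw [Finset.sum_congr rfl hre, ← Finset.mul_sum]
    rw [hQ]
    simp only
    unfold Pmul sC
    rw [Complex.real_smul]
    push_cast
    ring
  -- Parseval for the differences
  have hrepr : ∀ i : ℕ, ∀ v : ℤ,
      fourierCoeff ((G (n i) - G (n (i+1)) : Lp ℂ 2 μ) : AddCircle (1:ℝ) → ℂ) v
        = avgZH' (n i) f v - avgZH' (n (i+1)) f v := by
    intro i v
    rw [← fourierBasis_repr, map_sub]
    have : (fourierBasis.repr (G (n i)) - fourierBasis.repr (G (n (i+1)))) v
        = fourierBasis.repr (G (n i)) v - fourierBasis.repr (G (n (i+1))) v := by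
      rw [lp.coeFn_sub]
      rfl
    rw [this, fourierBasis_repr, fourierBasis_repr, hkey, hkey]
  have hsummable : ∀ i : ℕ,
      Summable fun v : ℤ => ‖avgZH' (n i) f v - avgZH' (n (i+1)) f v‖ ^ 2 := by
    intro i
    have h := lp.memℓp (fourierBasis.repr (G (n i) - G (n (i+1))))
    have h2 := (memℓp_gen_iff (by norm_num : (0:ℝ) < ((2:ℝ≥0∞)).toReal)).mp h
    rw [hexp] at h2
    apply h2.congr
    intro v
    rw [fourierBasis_repr, hrepr]
  constructor
  · exact hsummable
  -- value of each inner sum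
  have hval : ∀ i : ℕ, ∑' v : ℤ, ‖avgZH' (n i) f v - avgZH' (n (i+1)) f v‖ ^ 2
      = ∫ x, ‖Pmul (n i) x - Pmul (n (i+1)) x‖ ^ 2 * ‖(F : AddCircle (1:ℝ) → ℂ) x‖ ^ 2 ∂μ := by
    intro i
    have h1 := tsum_sq_fourierCoeff (G (n i) - G (n (i+1)))
    have h2 : ∑' v : ℤ, ‖avgZH' (n i) f v - avgZH' (n (i+1)) f v‖ ^ 2
        = ∑' v : ℤ, ‖fourierCoeff ((G (n i) - G (n (i+1)) : Lp ℂ 2 μ) : AddCircle (1:ℝ) → ℂ) v‖ ^ 2 := by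
      apply tsum_congr
      intro v
      rw [hrepr]
    rw [h2, h1]
    apply integral_congr_ae
    filter_upwards [Lp.coeFn_sub (G (n i)) (G (n (i+1))),
      MemLp.coeFn_toLp (hQmem (n i)), MemLp.coeFn_toLp (hQmem (n (i+1)))] with x hx h1x h2x
    rw [hx]
    simp only [Pi.sub_apply, hG]
    rw [h1x, h2x]
    simp only [hQ]
    rw [← sub_mul, norm_mul, mul_pow]
  -- integrability of the summands
  have hRint : ∀ i : ℕ, Integrable
      (fun x => ‖Pmul (n i) x - Pmul (n (i+1)) x‖ ^ 2 * ‖(F : AddCircle (1:ℝ) → ℂ) x‖ ^ 2) μ := by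
    intro i
    apply hFsq.bdd_mul (c := 4)
    · apply Continuous.aestronglyMeasurable
      apply Continuous.pow
      exact ((Pmul_cont (n i)).sub (Pmul_cont (n (i+1)))).norm
    · refine Filter.Eventually.of_forall (fun x => ?_)
      have h1 : ‖Pmul (n i) x - Pmul (n (i+1)) x‖ ≤ 2 := by
        calc ‖Pmul (n i) x - Pmul (n (i+1)) x‖
            ≤ ‖Pmul (n i) x‖ + ‖Pmul (n (i+1)) x‖ := norm_sub_le _ _
          _ ≤ 2 := by linarith [Pmul_norm_le (n i) x, Pmul_norm_le (n (i+1)) x]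
      have h0 : (0:ℝ) ≤ ‖Pmul (n i) x - Pmul (n (i+1)) x‖ := norm_nonneg _
      have : ‖Pmul (n i) x - Pmul (n (i+1)) x‖ ^ 2 ≤ 4 := by nlinarith
      calc ‖‖Pmul (n i) x - Pmul (n (i+1)) x‖ ^ 2‖
          = ‖Pmul (n i) x - Pmul (n (i+1)) x‖ ^ 2 := by
            rw [Real.norm_eq_abs, abs_of_nonneg (by positivity)]
        _ ≤ 4 := this
  -- the final chain
  have hpar : ∫ x, ‖(F : AddCircle (1:ℝ) → ℂ) x‖ ^ 2 ∂μ = ∑' v : ℤ, ‖f v‖ ^ 2 := by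
    rw [← tsum_sq_fourierCoeff F]
    apply tsum_congr
    intro v
    rw [hFc]
  calc ∑ i ∈ Finset.range N, ∑' v : ℤ, ‖avgZH' (n i) f v - avgZH' (n (i+1)) f v‖ ^ 2
      = ∑ i ∈ Finset.range N, ∫ x, ‖Pmul (n i) x - Pmul (n (i+1)) x‖ ^ 2
          * ‖(F : AddCircle (1:ℝ) → ℂ) x‖ ^ 2 ∂μ := by
        apply Finset.sum_congr rfl
        intro i _
        exact hval i
    _ = ∫ x, ∑ i ∈ Finset.range N, ‖Pmul (n i) x - Pmul (n (i+1)) x‖ ^ 2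
          * ‖(F : AddCircle (1:ℝ) → ℂ) x‖ ^ 2 ∂μ := by
        rw [integral_finset_sum _ (fun i _ => hRint i)]
    _ ≤ ∫ x, 30 * ‖(F : AddCircle (1:ℝ) → ℂ) x‖ ^ 2 ∂μ := by
        apply integral_mono (integrable_finset_sum _ (fun i _ => hRint i)) (hFsq.const_mul 30)
        intro x
        simp only
        rw [← Finset.sum_mul]
        apply mul_le_mul_of_nonneg_right ?_ (by positivity)
        exact pointwise_sq_bound (norm_fourier_apply (-1) x) N n hn
    _ = 30 * ∑' v : ℤ, ‖f v‖ ^ 2 := by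
        rw [integral_const_mul, hpar]

end Scalar

section Hilbert

open MeasureTheory ENNReal NNReal

lemma hasSum_inner_sq {H : Type} [NormedAddCommGroup H] [InnerProductSpace ℂ H]
    [CompleteSpace H] {ι : Type*} (b : HilbertBasis ι ℂ H) (x : H) :
    HasSum (fun e : ι => ‖(inner ℂ (b e) x : ℂ)‖ ^ 2) (‖x‖ ^ 2) := by
  have h := b.hasSum_inner_mul_inner x x
  have heq : (fun e : ι => (inner ℂ x (b e) : ℂ) * inner ℂ (b e) x)
      = fun e : ι => ((‖(inner ℂ (b e) x : ℂ)‖ ^ 2 : ℝ) : ℂ) := by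
    funext e
    have hw : (inner ℂ x (b e) : ℂ) = (starRingEnd ℂ) (inner ℂ (b e) x) := by
      rw [inner_conj_symm]
    rw [hw, ← Complex.normSq_eq_conj_mul_self]
    rw [Complex.sq_norm]
  rw [heq] at h
  have h2 := h.mapL Complex.reCLM
  have h3 : (fun e : ι => Complex.reCLM ((‖(inner ℂ (b e) x : ℂ)‖ ^ 2 : ℝ) : ℂ))
      = fun e : ι => ‖(inner ℂ (b e) x : ℂ)‖ ^ 2 := by
    funext e
    simp only [Complex.reCLM_apply]
    norm_cast
  rw [h3] at h2
  have h4 : Complex.reCLM (inner ℂ x x : ℂ) = ‖x‖ ^ 2 := by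
    simp only [Complex.reCLM_apply]
    simpa using inner_self_eq_norm_sq (𝕜 := ℂ) x
  rwa [h4] at h2

lemma enn_nnnorm_sq_eq {E : Type*} [NormedAddCommGroup E] (x : E) :
    (‖x‖₊ : ℝ≥0∞) ^ 2 = ENNReal.ofReal (‖x‖ ^ 2) := by
  rw [ENNReal.ofReal_pow (norm_nonneg x), ofReal_norm, enorm_eq_nnnorm]

lemma enn_tsum_sq_eq {E : Type*} [NormedAddCommGroup E] (g : ℤ → E)
    (hg : Summable fun v => ‖g v‖ ^ 2) :
    ∑' v : ℤ, (‖g v‖₊ : ℝ≥0∞) ^ 2 = ENNReal.ofReal (∑' v : ℤ, ‖g v‖ ^ 2) := by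
  rw [ENNReal.ofReal_tsum_of_nonneg (fun v => sq_nonneg _) hg]
  apply tsum_congr
  intro v
  rw [enn_nnnorm_sq_eq]

lemma vector_sq_decomp {H : Type} [NormedAddCommGroup H] [InnerProductSpace ℂ H]
    [CompleteSpace H] {ι : Type*} (b : HilbertBasis ι ℂ H) (x : H) :
    (‖x‖₊ : ℝ≥0∞) ^ 2 = ∑' e : ι, (‖(inner ℂ (b e) x : ℂ)‖₊ : ℝ≥0∞) ^ 2 := by
  have h := hasSum_inner_sq b x
  have hsum : Summable fun e : ι => ‖(inner ℂ (b e) x : ℂ)‖ ^ 2 := h.summable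
  rw [enn_nnnorm_sq_eq]
  rw [← h.tsum_eq]
  rw [ENNReal.ofReal_tsum_of_nonneg (fun e => sq_nonneg _) hsum]
  apply tsum_congr
  intro e
  rw [enn_nnnorm_sq_eq]

lemma inner_avg {H : Type} [NormedAddCommGroup H] [InnerProductSpace ℂ H]
    (x : H) (m : ℕ) (f : ℤ → H) (v : ℤ) :
    (inner ℂ x (avgZH' m f v) : ℂ) = avgZH' m (fun u => (inner ℂ x (f u) : ℂ)) v := by
  unfold avgZH'
  rw [RCLike.real_smul_eq_coe_smul (K := ℂ), inner_smul_right, inner_sum]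
  rw [RCLike.real_smul_eq_coe_smul (K := ℂ)]
  norm_cast

end Hilbert

/-- The `ℓ^2` square function inequality for the one-sided averaging operators on `ℤ`
with values in a complex Hilbert space (case `p = 2` of Theorem 1.6). -/
theorem square_function_L2_Z_Hilbert :
    ∃ C : ℝ, 0 < C ∧
      ∀ (H : Type) [NormedAddCommGroup H] [InnerProductSpace ℂ H] [CompleteSpace H],
      ∀ (N : ℕ) (n : ℕ → ℕ), StrictMono n → (∀ i, 0 < n i) →
      ∀ f : ℤ → H, Summable (fun v => ‖f v‖ ^ 2) →
        ∑ i ∈ Finset.range N, ∑' v : ℤ,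
            ((‖avgZH (n i) f v - avgZH (n (i + 1)) f v‖₊ : ℝ≥0∞) ^ 2)
          ≤ ENNReal.ofReal C * ∑' v : ℤ, ((‖f v‖₊ : ℝ≥0∞) ^ 2) := by
  classical
  refine ⟨30, by norm_num, ?_⟩
  intro H _ _ _ N n hn _ f hf
  obtain ⟨w, b, hb⟩ := exists_hilbertBasis ℂ H
  set D : ℕ → ℤ → H := fun i v => avgZH (n i) f v - avgZH (n (i+1)) f v with hD
  set fe : w → ℤ → ℂ := fun e u => inner ℂ (b e) (f u) with hfe
  have hfesum : ∀ e : w, Summable fun v => ‖fe e v‖ ^ 2 := by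
    intro e
    apply Summable.of_nonneg_of_le (fun v => sq_nonneg _) ?_ hf
    intro v
    have h1 : ‖fe e v‖ ≤ ‖f v‖ := by
      calc ‖fe e v‖ ≤ ‖b e‖ * ‖f v‖ := norm_inner_le_norm _ _
        _ = ‖f v‖ := by rw [b.orthonormal.1 e, one_mul]
    calc ‖fe e v‖ ^ 2 ≤ ‖f v‖ ^ 2 := by
          apply pow_le_pow_left₀ (norm_nonneg _) h1
      _ = ‖f v‖ ^ 2 := rfl
  have hinner_D : ∀ (i : ℕ) (v : ℤ) (e : w),
      (inner ℂ (b e) (D i v) : ℂ) = avgZH' (n i) (fe e) v - avgZH' (n (i+1)) (fe e) v := by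
    intro i v e
    have h1 : (inner ℂ (b e) (D i v) : ℂ)
        = inner ℂ (b e) (avgZH (n i) f v) - inner ℂ (b e) (avgZH (n (i+1)) f v) := by
      rw [hD]
      exact inner_sub_right _ _ _
    rw [h1]
    have h2 : ∀ m : ℕ, (inner ℂ (b e) (avgZH m f v) : ℂ) = avgZH' m (fe e) v := by
      intro m
      have : avgZH m f = avgZH' m f := rfl
      rw [this, inner_avg]
    rw [h2, h2]
  have step1 : ∀ i, ∑' v : ℤ, (‖D i v‖₊ : ℝ≥0∞) ^ 2
      = ∑' e : w, ∑' v : ℤ,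
          (‖avgZH' (n i) (fe e) v - avgZH' (n (i+1)) (fe e) v‖₊ : ℝ≥0∞) ^ 2 := by
    intro i
    calc ∑' v : ℤ, (‖D i v‖₊ : ℝ≥0∞) ^ 2
        = ∑' v : ℤ, ∑' e : w, (‖(inner ℂ (b e) (D i v) : ℂ)‖₊ : ℝ≥0∞) ^ 2 :=
          tsum_congr (fun v => vector_sq_decomp b (D i v))
      _ = ∑' e : w, ∑' v : ℤ, (‖(inner ℂ (b e) (D i v) : ℂ)‖₊ : ℝ≥0∞) ^ 2 := ENNReal.tsum_comm
      _ = ∑' e : w, ∑' v : ℤ,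
          (‖avgZH' (n i) (fe e) v - avgZH' (n (i+1)) (fe e) v‖₊ : ℝ≥0∞) ^ 2 := by
          apply tsum_congr; intro e; apply tsum_congr; intro v
          rw [hinner_D]
  have per_e : ∀ e : w, ∑ i ∈ Finset.range N, ∑' v : ℤ,
      (‖avgZH' (n i) (fe e) v - avgZH' (n (i+1)) (fe e) v‖₊ : ℝ≥0∞) ^ 2
      ≤ ENNReal.ofReal 30 * ∑' v : ℤ, (‖fe e v‖₊ : ℝ≥0∞) ^ 2 := by
    intro e
    obtain ⟨hsummable, hbound⟩ := scalar_key N n hn (fe e) (hfesum e)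
    calc ∑ i ∈ Finset.range N, ∑' v : ℤ,
        (‖avgZH' (n i) (fe e) v - avgZH' (n (i+1)) (fe e) v‖₊ : ℝ≥0∞) ^ 2
        = ∑ i ∈ Finset.range N, ENNReal.ofReal
            (∑' v : ℤ, ‖avgZH' (n i) (fe e) v - avgZH' (n (i+1)) (fe e) v‖ ^ 2) := by
          apply Finset.sum_congr rfl
          intro i _
          exact enn_tsum_sq_eq _ (hsummable i)
      _ = ENNReal.ofReal (∑ i ∈ Finset.range N,
            ∑' v : ℤ, ‖avgZH' (n i) (fe e) v - avgZH' (n (i+1)) (fe e) v‖ ^ 2) := by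
          rw [ENNReal.ofReal_sum_of_nonneg]
          intro i _
          apply tsum_nonneg
          intro v
          exact sq_nonneg _
      _ ≤ ENNReal.ofReal (30 * ∑' v : ℤ, ‖fe e v‖ ^ 2) := ENNReal.ofReal_le_ofReal hbound
      _ = ENNReal.ofReal 30 * ENNReal.ofReal (∑' v : ℤ, ‖fe e v‖ ^ 2) := by
          rw [ENNReal.ofReal_mul (by norm_num)]
      _ = ENNReal.ofReal 30 * ∑' v : ℤ, (‖fe e v‖₊ : ℝ≥0∞) ^ 2 := by
          rw [← enn_tsum_sq_eq _ (hfesum e)]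
  calc ∑ i ∈ Finset.range N, ∑' v : ℤ,
        ((‖avgZH (n i) f v - avgZH (n (i + 1)) f v‖₊ : ℝ≥0∞) ^ 2)
      = ∑ i ∈ Finset.range N, ∑' e : w, ∑' v : ℤ,
          (‖avgZH' (n i) (fe e) v - avgZH' (n (i+1)) (fe e) v‖₊ : ℝ≥0∞) ^ 2 := by
        apply Finset.sum_congr rfl
        intro i _
        exact step1 i
    _ = ∑' e : w, ∑ i ∈ Finset.range N, ∑' v : ℤ,
          (‖avgZH' (n i) (fe e) v - avgZH' (n (i+1)) (fe e) v‖₊ : ℝ≥0∞) ^ 2 :=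
        (Summable.tsum_finsetSum (fun i _ => ENNReal.summable)).symm
    _ ≤ ∑' e : w, (ENNReal.ofReal 30 * ∑' v : ℤ, (‖fe e v‖₊ : ℝ≥0∞) ^ 2) :=
        ENNReal.tsum_le_tsum per_e
    _ = ENNReal.ofReal 30 * ∑' e : w, ∑' v : ℤ, (‖fe e v‖₊ : ℝ≥0∞) ^ 2 :=
        ENNReal.tsum_mul_left
    _ = ENNReal.ofReal 30 * ∑' v : ℤ, ∑' e : w, (‖fe e v‖₊ : ℝ≥0∞) ^ 2 := by
        rw [ENNReal.tsum_comm]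
    _ = ENNReal.ofReal 30 * ∑' v : ℤ, ((‖f v‖₊ : ℝ≥0∞) ^ 2) := by
        congr 1
        apply tsum_congr
        intro v
        exact (vector_sq_decomp b (f v)).symm
end

section
/- (Almost-orthogonality lemma, Hilbert-space form of Lemma 4.2.) Let H be a complex Hilbert space and, for each k ∈ ℤ and i ∈ ℕ, let S_{k,i} : H → H be a bounded linear operator. Let h ∈ H and let (u_n)_{n∈ℤ}, (v_n)_{n∈ℤ} be families in H such that h = ∑_{n∈ℤ} u_n (the series converging in H) and ∑_{n∈ℤ} ‖v_n‖^2 < ∞. Suppose there is a function σ : ℤ → [0, ∞) with w := ∑_{j∈ℤ} σ(j) < ∞ such that for all n, k ∈ ℤ: ( ∑_{i∈ℕ} ‖S_{k,i} u_n‖^2 )^{1/2} ≤ σ(n − k) ‖v_n‖. Then ∑_{k∈ℤ} ∑_{i∈ℕ} ‖S_{k,i} h‖^2 ≤ w^2 ∑_{n∈ℤ} ‖v_n‖^2. -/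
open Finset ENNReal MeasureTheory

/-- Cauchy–Schwarz for `tsum` in `ℝ≥0∞`. -/
lemma ennreal_tsum_cs {ι : Type*} [Countable ι] [MeasurableSpace ι]
    [MeasurableSingletonClass ι] (f g : ι → ℝ≥0∞) :
    ∑' i, f i * g i ≤ (∑' i, f i ^ 2) ^ (1 / 2 : ℝ) * (∑' i, g i ^ 2) ^ (1 / 2 : ℝ) := by
  have h2 : ∀ x : ℝ≥0∞, x ^ 2 = x ^ (2 : ℝ) := fun x => by
    rw [← ENNReal.rpow_natCast x 2]; norm_num
  simp only [h2, ← lintegral_count]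
  exact ENNReal.lintegral_mul_le_Lp_mul_Lq Measure.count ⟨by norm_num, by norm_num, by norm_num⟩
    (Measurable.of_discrete.aemeasurable) (Measurable.of_discrete.aemeasurable)

lemma ennreal_sq_rpow_half (x : ℝ≥0∞) : (x ^ (1 / 2 : ℝ)) ^ 2 = x := by
  rw [← ENNReal.rpow_natCast (x ^ (1 / 2 : ℝ)) 2, ← ENNReal.rpow_mul]
  norm_num

lemma ennreal_half_mul_half (x : ℝ≥0∞) : x ^ (1 / 2 : ℝ) * x ^ (1 / 2 : ℝ) = x := by
  rw [← sq, ennreal_sq_rpow_half]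

/-- Almost-orthogonality lemma (Hilbert-space form of Lemma 4.2). -/
theorem almost_orthogonality
    {H : Type*} [NormedAddCommGroup H] [InnerProductSpace ℂ H] [CompleteSpace H]
    (S : ℤ → ℕ → (H →L[ℂ] H)) (h : H) (u v : ℤ → H)
    (hu : HasSum u h) (hv : Summable (fun n => ‖v n‖ ^ 2))
    (σ : ℤ → ℝ) (hσ : ∀ j, 0 ≤ σ j) (hσsum : Summable σ)
    (w : ℝ) (hw : w = ∑' j : ℤ, σ j)
    (hyp : ∀ n k : ℤ,
      (∑' i : ℕ, ((‖S k i (u n)‖₊ : ℝ≥0∞) ^ 2)) ^ (1 / 2 : ℝ)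
        ≤ ENNReal.ofReal (σ (n - k) * ‖v n‖)) :
    ∑' k : ℤ, ∑' i : ℕ, ((‖S k i h‖₊ : ℝ≥0∞) ^ 2)
      ≤ ENNReal.ofReal w ^ 2 * ∑' n : ℤ, ((‖v n‖₊ : ℝ≥0∞) ^ 2) := by
  set c : ℤ → ℤ → ℕ → ℝ≥0∞ := fun n k i => (‖S k i (u n)‖₊ : ℝ≥0∞) with hc
  set b : ℤ → ℝ≥0∞ := fun n => (‖v n‖₊ : ℝ≥0∞) with hb
  set a : ℤ → ℝ≥0∞ := fun j => ENNReal.ofReal (σ j) with ha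
  set A : ℝ≥0∞ := ∑' j, a j with hA
  have hAw : ENNReal.ofReal w = A := by
    rw [hw, ENNReal.ofReal_tsum_of_nonneg hσ hσsum]
  -- hypothesis in product form
  have hD : ∀ n k : ℤ, (∑' i, c n k i ^ 2) ^ (1 / 2 : ℝ) ≤ a (n - k) * b n := by
    intro n k
    have := hyp n k
    rwa [ENNReal.ofReal_mul (hσ _), ofReal_norm] at this
  -- pointwise bound on ‖S k i h‖
  have hcoe : ∀ k i, (‖S k i h‖₊ : ℝ≥0∞) ≤ ∑' n, c n k i := by
    intro k i
    by_cases htop : ∑' n, c n k i = ⊤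
    · exact htop ▸ le_top
    · have hsum : Summable fun n => ‖S k i (u n)‖₊ :=
        ENNReal.tsum_coe_ne_top_iff_summable.mp htop
      have hS : HasSum (fun n => S k i (u n)) (S k i h) := (S k i).hasSum hu
      rw [hc]
      calc (‖S k i h‖₊ : ℝ≥0∞) = (‖∑' n, S k i (u n)‖₊ : ℝ≥0∞) := by rw [hS.tsum_eq]
        _ ≤ (↑(∑' n, ‖S k i (u n)‖₊) : ℝ≥0∞) := ENNReal.coe_le_coe.mpr
            (nnnorm_tsum_le hsum)
        _ = ∑' n, (‖S k i (u n)‖₊ : ℝ≥0∞) := ENNReal.coe_tsum hsum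
  calc ∑' k : ℤ, ∑' i : ℕ, ((‖S k i h‖₊ : ℝ≥0∞) ^ 2)
      ≤ ∑' k : ℤ, ∑' i : ℕ, (∑' n, c n k i) * (∑' m, c m k i) := by
        refine ENNReal.tsum_le_tsum fun k => ENNReal.tsum_le_tsum fun i => ?_
        rw [sq]
        exact mul_le_mul' (hcoe k i) (hcoe k i)
    _ = ∑' k : ℤ, ∑' n, ∑' m, ∑' i, c n k i * c m k i := by
        refine tsum_congr fun k => ?_
        simp_rw [← ENNReal.tsum_mul_right, ← ENNReal.tsum_mul_left]
        rw [ENNReal.tsum_comm (f := fun i n => ∑' m, c n k i * c m k i)]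
        exact tsum_congr fun n =>
          ENNReal.tsum_comm (f := fun i m => c n k i * c m k i)
    _ ≤ ∑' k : ℤ, ∑' n, ∑' m, (a (n - k) * b n) * (a (m - k) * b m) := by
        refine ENNReal.tsum_le_tsum fun k => ENNReal.tsum_le_tsum fun n =>
          ENNReal.tsum_le_tsum fun m => ?_
        calc ∑' i, c n k i * c m k i
            ≤ (∑' i, c n k i ^ 2) ^ (1 / 2 : ℝ) * (∑' i, c m k i ^ 2) ^ (1 / 2 : ℝ) :=
              ennreal_tsum_cs _ _
          _ ≤ (a (n - k) * b n) * (a (m - k) * b m) :=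
              mul_le_mul' (hD n k) (hD m k)
    _ = ∑' k : ℤ, (∑' n, a (n - k) * b n) ^ 2 := by
        refine tsum_congr fun k => ?_
        rw [sq]
        simp_rw [ENNReal.tsum_mul_left, ENNReal.tsum_mul_right]
    _ ≤ ∑' k : ℤ, A * ∑' n, a (n - k) * b n ^ 2 := by
        refine ENNReal.tsum_le_tsum fun k => ?_
        have hcs : ∑' n, a (n - k) * b n
            ≤ (∑' n, a (n - k)) ^ (1 / 2 : ℝ) * (∑' n, a (n - k) * b n ^ 2) ^ (1 / 2 : ℝ) := by
          have := ennreal_tsum_cs (fun n : ℤ => a (n - k) ^ (1 / 2 : ℝ))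
            (fun n : ℤ => a (n - k) ^ (1 / 2 : ℝ) * b n)
          simp only [mul_pow, ennreal_sq_rpow_half, ← mul_assoc,
            ennreal_half_mul_half] at this
          exact this
        have hshift : ∑' n : ℤ, a (n - k) = A := (Equiv.subRight k).tsum_eq a
        calc (∑' n, a (n - k) * b n) ^ 2
            ≤ ((∑' n, a (n - k)) ^ (1 / 2 : ℝ) * (∑' n, a (n - k) * b n ^ 2) ^ (1 / 2 : ℝ)) ^ 2 :=
              pow_le_pow_left' hcs 2
          _ = A * ∑' n, a (n - k) * b n ^ 2 := by
              rw [mul_pow, ennreal_sq_rpow_half, ennreal_sq_rpow_half, hshift]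
    _ = A * ∑' n, (∑' k, a (n - k)) * b n ^ 2 := by
        rw [ENNReal.tsum_mul_left]
        congr 1
        rw [ENNReal.tsum_comm (f := fun k n => a (n - k) * b n ^ 2)]
        exact tsum_congr fun n => ENNReal.tsum_mul_right
    _ = ENNReal.ofReal w ^ 2 * ∑' n : ℤ, ((‖v n‖₊ : ℝ≥0∞) ^ 2) := by
        have hshift : ∀ n : ℤ, ∑' k, a (n - k) = A := fun n => (Equiv.subLeft n).tsum_eq a
        simp_rw [hshift, ENNReal.tsum_mul_left, hAw, ← mul_assoc, sq]
        rfl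
end

section
/- (Commutative case of Lemma 1.4.) Let (X, μ) be a measure space and 1 ≤ p < ∞. Then there exists a constant C_p depending only on p such that for every bounded linear operator T : L^p(X, μ) → L^p(X, μ), every N ∈ ℕ, and every finite sequence x_1, …, x_N ∈ L^p(X, μ): ‖ ( ∑_{n=1}^{N} |T x_n|^2 )^{1/2} ‖_{L^p(X,μ)} ≤ C_p ‖T‖ ‖ ( ∑_{n=1}^{N} |x_n|^2 )^{1/2} ‖_{L^p(X,μ)}. That is, every bounded linear operator on L^p extends to a bounded operator on the ℓ^2-valued space L^p(X; ℓ^2) with norm at most C_p‖T‖. -/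
open Finset

namespace KhAux

noncomputable def sgn (s : Finset ℕ) (n : ℕ) : ℝ := if n ∈ s then 1 else -1

lemma sgn_insert_self (s : Finset ℕ) (N : ℕ) : sgn (insert N s) N = 1 := by
  simp [sgn]

lemma sgn_insert_of_ne (s : Finset ℕ) {N n : ℕ} (h : n ≠ N) :
    sgn (insert N s) n = sgn s n := by
  simp [sgn, Finset.mem_insert, h]

lemma sgn_of_not_mem {s : Finset ℕ} {n : ℕ} (h : n ∉ s) : sgn s n = -1 := by
  simp [sgn, h]

lemma not_mem_of_mem_powerset_range {s : Finset ℕ} {N : ℕ}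
    (h : s ∈ (range N).powerset) : N ∉ s := by
  intro hN
  exact absurd (mem_range.1 (mem_powerset.1 h hN)) (lt_irrefl N)

/-- Skeleton: splitting the sum over the powerset of `range (N+1)`. -/
lemma powerset_split (N : ℕ) (F : Finset ℕ → ℝ) :
    ∑ s ∈ (range (N + 1)).powerset, F s
      = ∑ s ∈ (range N).powerset, (F s + F (insert N s)) := by
  rw [range_add_one, powerset_insert, sum_union, sum_add_distrib]
  · congr 1
    rw [sum_image]
    intro t ht u hu htu
    have hNt : N ∉ t := not_mem_of_mem_powerset_range ht
    have hNu : N ∉ u := not_mem_of_mem_powerset_range hu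
    have := congrArg (fun v => Finset.erase v N) htu
    simpa [Finset.erase_insert, hNt, hNu] using this
  · rw [Finset.disjoint_left]
    intro t ht hti
    rcases Finset.mem_image.1 hti with ⟨u, hu, rfl⟩
    exact not_mem_of_mem_powerset_range ht (Finset.mem_insert_self _ _)

/-- The signed sum. -/
noncomputable def S (N : ℕ) (b : ℕ → ℝ) (s : Finset ℕ) : ℝ :=
  ∑ n ∈ range N, sgn s n * b n

lemma S_succ_left {N : ℕ} {s : Finset ℕ} (hs : s ∈ (range N).powerset) (b : ℕ → ℝ) :
    S (N + 1) b s = S N b s - b N := by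
  have hN : N ∉ s := not_mem_of_mem_powerset_range hs
  rw [S, sum_range_succ, sgn_of_not_mem hN, S]
  ring

lemma S_succ_right {N : ℕ} {s : Finset ℕ} (hs : s ∈ (range N).powerset) (b : ℕ → ℝ) :
    S (N + 1) b (insert N s) = S N b s + b N := by
  rw [S, sum_range_succ, sgn_insert_self]
  rw [one_mul, S]
  congr 1
  refine Finset.sum_congr rfl fun n hn => ?_
  rw [sgn_insert_of_ne _ (Nat.ne_of_lt (mem_range.1 hn))]

end KhAux

namespace KhAux

lemma orth : ∀ (N : ℕ) (b : ℕ → ℝ),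
    ∑ s ∈ (range N).powerset, (S N b s) ^ 2
      = 2 ^ N * ∑ n ∈ range N, b n ^ 2 := by
  intro N
  induction N with
  | zero => intro b; simp [S]
  | succ N ih =>
    intro b
    rw [powerset_split N (fun s => (S (N + 1) b s) ^ 2)]
    have h : ∀ s ∈ (range N).powerset,
        (S (N + 1) b s) ^ 2 + (S (N + 1) b (insert N s)) ^ 2
          = 2 * (S N b s) ^ 2 + 2 * b N ^ 2 := by
      intro s hs
      rw [S_succ_left hs, S_succ_right hs]; ring
    rw [sum_congr rfl h, sum_add_distrib, ← mul_sum, ih, sum_const,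
      card_powerset, card_range, sum_range_succ]
    push_cast
    ring

lemma sum_even_reindex (g : ℕ → ℝ) : ∀ k : ℕ,
    ∑ i ∈ range (2 * k + 1), (if Even i then g i else 0)
      = ∑ m ∈ range (k + 1), g (2 * m) := by
  intro k
  induction k with
  | zero => simp
  | succ k ih =>
    have h2 : 2 * (k + 1) + 1 = (2 * k + 1) + 1 + 1 := by ring
    rw [h2, sum_range_succ, sum_range_succ, ih, sum_range_succ]
    have he : Even (2 * k + 1 + 1) := by
      refine ⟨k + 1, by ring⟩
    have ho : ¬ Even (2 * k + 1) := by
      simp [Nat.even_add_one, parity_simps]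
    rw [if_pos he, if_neg ho, add_zero]
    conv_rhs => rw [sum_range_succ]
    have h5 : 2 * k + 1 + 1 = 2 * k + 2 := by ring
    rw [h5, sum_range_succ]
    have h6 : 2 * (k + 1) = 2 * k + 2 := by ring
    rw [h6]

lemma binom_pair (k : ℕ) (y c : ℝ) :
    (y - c) ^ (2 * k) + (y + c) ^ (2 * k)
      = ∑ m ∈ range (k + 1),
          2 * (Nat.choose (2 * k) (2 * m) : ℝ) * y ^ (2 * m) * c ^ (2 * (k - m)) := by
  have h1 : (y + c) ^ (2 * k) = ∑ i ∈ range (2 * k + 1),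
      y ^ i * c ^ (2 * k - i) * (Nat.choose (2 * k) i : ℝ) := add_pow y c (2 * k)
  have h2 : (y - c) ^ (2 * k) = ∑ i ∈ range (2 * k + 1),
      y ^ i * (-c) ^ (2 * k - i) * (Nat.choose (2 * k) i : ℝ) := by
    rw [sub_eq_add_neg]; exact add_pow y (-c) (2 * k)
  rw [h1, h2, ← sum_add_distrib]
  have h3 : ∀ i ∈ range (2 * k + 1),
      y ^ i * (-c) ^ (2 * k - i) * (Nat.choose (2 * k) i : ℝ)
        + y ^ i * c ^ (2 * k - i) * (Nat.choose (2 * k) i : ℝ)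
      = (if Even i then 2 * (Nat.choose (2 * k) i : ℝ) * y ^ i * c ^ (2 * k - i) else 0) := by
    intro i hi
    have hi' : i ≤ 2 * k := Nat.lt_succ_iff.1 (mem_range.1 hi)
    have hpar : Even (2 * k - i) ↔ Even i := by
      rw [Nat.even_sub hi']
      simp [parity_simps]
    by_cases h : Even i
    · have : Even (2 * k - i) := hpar.2 h
      rw [this.neg_pow, if_pos h]; ring
    · have : ¬ Even (2 * k - i) := fun he => h (hpar.1 he)
      rw [(Nat.not_even_iff_odd.1 this).neg_pow, if_neg h]; ring
  rw [sum_congr rfl h3, sum_even_reindex]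
  refine sum_congr rfl fun m hm => ?_
  have hm' : m ≤ k := Nat.lt_succ_iff.1 (mem_range.1 hm)
  congr 2
  omega

lemma choose_mul_le (k m : ℕ) (hm : m ≤ k) :
    (Nat.choose (2 * k) (2 * m)) * 4 ^ (m ^ 2) ≤ 4 ^ (k ^ 2) * Nat.choose k m := by
  rcases eq_or_lt_of_le hm with rfl | hlt
  · simp [Nat.choose_self]
  · have h1 : Nat.choose (2 * k) (2 * m) ≤ 4 ^ k := by
      calc Nat.choose (2 * k) (2 * m) ≤ ∑ i ∈ range (2 * k + 1), Nat.choose (2 * k) i :=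
            single_le_sum (fun i _ => Nat.zero_le _) (by
              exact mem_range.2 (by omega))
        _ = 2 ^ (2 * k) := Nat.sum_range_choose (2 * k)
        _ = 4 ^ k := by rw [pow_mul]; norm_num
    have h2 : k + m ^ 2 ≤ k ^ 2 := by nlinarith
    calc Nat.choose (2 * k) (2 * m) * 4 ^ (m ^ 2) ≤ 4 ^ k * 4 ^ (m ^ 2) :=
          Nat.mul_le_mul_right _ h1
      _ = 4 ^ (k + m ^ 2) := (pow_add 4 k (m ^ 2)).symm
      _ ≤ 4 ^ (k ^ 2) := Nat.pow_le_pow_right (by norm_num) h2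
      _ ≤ 4 ^ (k ^ 2) * Nat.choose k m :=
          Nat.le_mul_of_pos_right _ (Nat.choose_pos hm)

lemma momentR : ∀ (N k : ℕ) (b : ℕ → ℝ),
    ∑ s ∈ (range N).powerset, (S N b s) ^ (2 * k)
      ≤ 4 ^ (k ^ 2) * 2 ^ N * (∑ n ∈ range N, b n ^ 2) ^ k := by
  intro N
  induction N with
  | zero =>
    intro k b
    rcases Nat.eq_zero_or_pos k with rfl | hk
    · simp [S]
    · simp only [range_zero, powerset_empty, sum_singleton, sum_empty, S]
      rw [zero_pow (by omega), zero_pow (by omega)]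
      positivity
  | succ N ih =>
    intro k b
    set c := b N with hc
    set σ := ∑ n ∈ range N, b n ^ 2 with hσ
    have hσ0 : 0 ≤ σ := sum_nonneg fun n _ => sq_nonneg _
    rw [powerset_split N (fun s => (S (N + 1) b s) ^ (2 * k))]
    have h : ∀ s ∈ (range N).powerset,
        (S (N + 1) b s) ^ (2 * k) + (S (N + 1) b (insert N s)) ^ (2 * k)
          = ∑ m ∈ range (k + 1),
              2 * (Nat.choose (2 * k) (2 * m) : ℝ) * (S N b s) ^ (2 * m) * c ^ (2 * (k - m)) := by
      intro s hs
      rw [S_succ_left hs, S_succ_right hs, binom_pair]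
    rw [sum_congr rfl h, sum_comm]
    have hstep : ∀ m ∈ range (k + 1),
        ∑ s ∈ (range N).powerset,
            2 * (Nat.choose (2 * k) (2 * m) : ℝ) * (S N b s) ^ (2 * m) * c ^ (2 * (k - m))
          ≤ 2 ^ (N + 1) * 4 ^ (k ^ 2) * ((Nat.choose k m : ℝ) * σ ^ m * (c ^ 2) ^ (k - m)) := by
      intro m hm
      have hm' : m ≤ k := Nat.lt_succ_iff.1 (mem_range.1 hm)
      have hcpow : (0:ℝ) ≤ c ^ (2 * (k - m)) := by
        rw [pow_mul]; positivity
      have h1 : ∑ s ∈ (range N).powerset,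
            2 * (Nat.choose (2 * k) (2 * m) : ℝ) * (S N b s) ^ (2 * m) * c ^ (2 * (k - m))
          = 2 * (Nat.choose (2 * k) (2 * m) : ℝ) * c ^ (2 * (k - m))
              * ∑ s ∈ (range N).powerset, (S N b s) ^ (2 * m) := by
        rw [mul_sum]; refine sum_congr rfl fun s _ => by ring
      rw [h1]
      have h2 : ∑ s ∈ (range N).powerset, (S N b s) ^ (2 * m)
          ≤ 4 ^ (m ^ 2) * 2 ^ N * σ ^ m := ih m b
      have h3 : 2 * (Nat.choose (2 * k) (2 * m) : ℝ) * c ^ (2 * (k - m))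
            * ∑ s ∈ (range N).powerset, (S N b s) ^ (2 * m)
          ≤ 2 * (Nat.choose (2 * k) (2 * m) : ℝ) * c ^ (2 * (k - m))
            * (4 ^ (m ^ 2) * 2 ^ N * σ ^ m) := by
        refine mul_le_mul_of_nonneg_left h2 (by positivity)
      refine h3.trans ?_
      have h4 : (Nat.choose (2 * k) (2 * m) : ℝ) * 4 ^ (m ^ 2)
          ≤ 4 ^ (k ^ 2) * (Nat.choose k m : ℝ) := by
        have := choose_mul_le k m hm'
        calc (Nat.choose (2 * k) (2 * m) : ℝ) * 4 ^ (m ^ 2)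
            = ((Nat.choose (2 * k) (2 * m) * 4 ^ (m ^ 2) : ℕ) : ℝ) := by push_cast; ring
          _ ≤ ((4 ^ (k ^ 2) * Nat.choose k m : ℕ) : ℝ) := by exact_mod_cast Nat.cast_le.2 this
          _ = 4 ^ (k ^ 2) * (Nat.choose k m : ℝ) := by push_cast; ring
      have hc2 : c ^ (2 * (k - m)) = (c ^ 2) ^ (k - m) := by rw [pow_mul]
      calc 2 * (Nat.choose (2 * k) (2 * m) : ℝ) * c ^ (2 * (k - m))
            * (4 ^ (m ^ 2) * 2 ^ N * σ ^ m)
          = ((Nat.choose (2 * k) (2 * m) : ℝ) * 4 ^ (m ^ 2))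
              * (2 * 2 ^ N * c ^ (2 * (k - m)) * σ ^ m) := by ring
        _ ≤ (4 ^ (k ^ 2) * (Nat.choose k m : ℝ))
              * (2 * 2 ^ N * c ^ (2 * (k - m)) * σ ^ m) :=
            mul_le_mul_of_nonneg_right h4 (by positivity)
        _ = 2 ^ (N + 1) * 4 ^ (k ^ 2) * ((Nat.choose k m : ℝ) * σ ^ m * (c ^ 2) ^ (k - m)) := by
            rw [hc2]; ring
    refine (sum_le_sum hstep).trans ?_
    rw [← mul_sum]
    have hbin : ∑ m ∈ range (k + 1), (Nat.choose k m : ℝ) * σ ^ m * (c ^ 2) ^ (k - m)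
        = (σ + c ^ 2) ^ k := by
      rw [add_pow]
      refine sum_congr rfl fun m hm => by ring
    rw [hbin, sum_range_succ, ← hσ, ← hc]
    ring_nf
    exact le_refl _

end KhAux

namespace KhAux

/-- Complex signed sum. -/
noncomputable def SC (N : ℕ) (a : ℕ → ℂ) (s : Finset ℕ) : ℂ :=
  ∑ n ∈ range N, (sgn s n : ℂ) * a n

lemma SC_re (N : ℕ) (a : ℕ → ℂ) (s : Finset ℕ) :
    (SC N a s).re = S N (fun n => (a n).re) s := by
  rw [SC, S, Complex.re_sum]
  exact sum_congr rfl fun n _ => by simp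

lemma SC_im (N : ℕ) (a : ℕ → ℂ) (s : Finset ℕ) :
    (SC N a s).im = S N (fun n => (a n).im) s := by
  rw [SC, S, Complex.im_sum]
  exact sum_congr rfl fun n _ => by simp

lemma norm_sq_eq (z : ℂ) : ‖z‖ ^ 2 = z.re ^ 2 + z.im ^ 2 := by
  rw [Complex.sq_norm, Complex.normSq_apply]; ring

lemma orthC (N : ℕ) (a : ℕ → ℂ) :
    ∑ s ∈ (range N).powerset, ‖SC N a s‖ ^ 2
      = 2 ^ N * ∑ n ∈ range N, ‖a n‖ ^ 2 := by
  have h : ∀ s ∈ (range N).powerset, ‖SC N a s‖ ^ 2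
      = (S N (fun n => (a n).re) s) ^ 2 + (S N (fun n => (a n).im) s) ^ 2 := by
    intro s _
    rw [norm_sq_eq, SC_re, SC_im]
  rw [sum_congr rfl h, sum_add_distrib, orth, orth, ← mul_add, ← sum_add_distrib]
  congr 1
  exact sum_congr rfl fun n _ => (norm_sq_eq (a n)).symm

lemma momentC (N k : ℕ) (a : ℕ → ℂ) :
    ∑ s ∈ (range N).powerset, ‖SC N a s‖ ^ (2 * k)
      ≤ 2 ^ (k + 1) * 4 ^ (k ^ 2) * 2 ^ N * (∑ n ∈ range N, ‖a n‖ ^ 2) ^ k := by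
  set σ := ∑ n ∈ range N, ‖a n‖ ^ 2 with hσ
  have hσ0 : (0:ℝ) ≤ σ := sum_nonneg fun n _ => sq_nonneg _
  have hre : ∑ n ∈ range N, (a n).re ^ 2 ≤ σ := by
    rw [hσ]
    refine sum_le_sum fun n _ => ?_
    rw [norm_sq_eq]; nlinarith [sq_nonneg (a n).im]
  have him : ∑ n ∈ range N, (a n).im ^ 2 ≤ σ := by
    rw [hσ]
    refine sum_le_sum fun n _ => ?_
    rw [norm_sq_eq]; nlinarith [sq_nonneg (a n).re]
  have hre0 : (0:ℝ) ≤ ∑ n ∈ range N, (a n).re ^ 2 := sum_nonneg fun n _ => sq_nonneg _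
  have him0 : (0:ℝ) ≤ ∑ n ∈ range N, (a n).im ^ 2 := sum_nonneg fun n _ => sq_nonneg _
  have hpt : ∀ s ∈ (range N).powerset, ‖SC N a s‖ ^ (2 * k)
      ≤ 2 ^ k * ((S N (fun n => (a n).re) s) ^ (2 * k) + (S N (fun n => (a n).im) s) ^ (2 * k)) := by
    intro s _
    have h1 : ‖SC N a s‖ ^ (2 * k)
        = ((S N (fun n => (a n).re) s) ^ 2 + (S N (fun n => (a n).im) s) ^ 2) ^ k := by
      rw [pow_mul, norm_sq_eq, SC_re, SC_im]
    rw [h1]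
    calc ((S N (fun n => (a n).re) s) ^ 2 + (S N (fun n => (a n).im) s) ^ 2) ^ k
        ≤ 2 ^ (k - 1) * (((S N (fun n => (a n).re) s) ^ 2) ^ k + ((S N (fun n => (a n).im) s) ^ 2) ^ k) :=
          add_pow_le (sq_nonneg _) (sq_nonneg _) k
      _ ≤ 2 ^ k * (((S N (fun n => (a n).re) s) ^ 2) ^ k + ((S N (fun n => (a n).im) s) ^ 2) ^ k) := by
          refine mul_le_mul_of_nonneg_right ?_ (by positivity)
          exact pow_le_pow_right₀ (by norm_num) (Nat.sub_le k 1)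
      _ = 2 ^ k * ((S N (fun n => (a n).re) s) ^ (2 * k) + (S N (fun n => (a n).im) s) ^ (2 * k)) := by
          rw [← pow_mul, ← pow_mul]
  refine (sum_le_sum hpt).trans ?_
  rw [← mul_sum, sum_add_distrib]
  have h2 : ∑ s ∈ (range N).powerset, (S N (fun n => (a n).re) s) ^ (2 * k)
      ≤ 4 ^ (k ^ 2) * 2 ^ N * σ ^ k :=
    (momentR N k _).trans (by
      refine mul_le_mul_of_nonneg_left (pow_le_pow_left₀ hre0 hre k) (by positivity))
  have h3 : ∑ s ∈ (range N).powerset, (S N (fun n => (a n).im) s) ^ (2 * k)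
      ≤ 4 ^ (k ^ 2) * 2 ^ N * σ ^ k :=
    (momentR N k _).trans (by
      refine mul_le_mul_of_nonneg_left (pow_le_pow_left₀ him0 him k) (by positivity))
  calc (2:ℝ) ^ k * (∑ s ∈ (range N).powerset, (S N (fun n => (a n).re) s) ^ (2 * k)
        + ∑ s ∈ (range N).powerset, (S N (fun n => (a n).im) s) ^ (2 * k))
      ≤ 2 ^ k * (4 ^ (k ^ 2) * 2 ^ N * σ ^ k + 4 ^ (k ^ 2) * 2 ^ N * σ ^ k) := by
        refine mul_le_mul_of_nonneg_left (add_le_add h2 h3) (by positivity)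
    _ = 2 ^ (k + 1) * 4 ^ (k ^ 2) * 2 ^ N * σ ^ k := by ring

end KhAux

namespace KhAux

lemma rpow_sq_comm {x : ℝ} (hx : 0 ≤ x) (r : ℝ) : (x ^ r) ^ 2 = x ^ (r * 2) := by
  rw [← Real.rpow_natCast (x ^ r) 2, ← Real.rpow_mul hx]
  norm_num

/-- Pointwise Khintchine, upper bound for real exponents. -/
lemma upper (N : ℕ) (a : ℕ → ℂ) (q : ℝ) (hq : 0 ≤ q) (k : ℕ) (hk : q ≤ 2 * k) :
    ∑ s ∈ (range N).powerset, ‖SC N a s‖ ^ q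
      ≤ (1 + 2 ^ (k + 1) * 4 ^ (k ^ 2)) * 2 ^ N * (∑ n ∈ range N, ‖a n‖ ^ 2) ^ (q / 2) := by
  set σ := ∑ n ∈ range N, ‖a n‖ ^ 2 with hσ
  have hσ0 : (0:ℝ) ≤ σ := sum_nonneg fun n _ => sq_nonneg _
  have hD0 : (0:ℝ) ≤ 2 ^ (k + 1) * 4 ^ (k ^ 2) := by positivity
  rcases eq_or_lt_of_le hσ0 with hσz | hσpos
  · -- σ = 0 : all a n = 0 on range N
    have hz : ∀ n ∈ range N, a n = 0 := by
      intro n hn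
      have h := (sum_eq_zero_iff_of_nonneg (fun i _ => sq_nonneg ‖a i‖)).1 hσz.symm n hn
      have : ‖a n‖ = 0 := by nlinarith [norm_nonneg (a n)]
      simpa using this
    have hSC : ∀ s ∈ (range N).powerset, SC N a s = 0 := by
      intro s _
      rw [SC]
      exact sum_eq_zero fun n hn => by rw [hz n hn, mul_zero]
    rcases eq_or_lt_of_le hq with hq0 | hqpos
    · simp only [← hq0, Real.rpow_zero]
      rw [sum_const, card_powerset, card_range, nsmul_eq_mul, mul_one]
      rw [show (0:ℝ)/2 = 0 by norm_num, Real.rpow_zero, mul_one]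
      push_cast
      nlinarith [pow_pos (show (0:ℝ) < 2 by norm_num) N]
    · have hL : ∑ s ∈ (range N).powerset, ‖SC N a s‖ ^ q = 0 := by
        refine sum_eq_zero fun s hs => ?_
        rw [hSC s hs, norm_zero, Real.zero_rpow (ne_of_gt hqpos)]
      rw [hL]
      positivity
  · -- σ > 0 : normalize
    set t := Real.sqrt σ with ht
    have htpos : 0 < t := Real.sqrt_pos.2 hσpos
    have ht2 : t ^ 2 = σ := Real.sq_sqrt hσ0
    set u : ℕ → ℂ := fun n => a n / (t : ℂ) with hu
    have hSCu : ∀ s, SC N u s = SC N a s / (t : ℂ) := by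
      intro s
      rw [SC, SC, sum_div]
      refine sum_congr rfl fun n _ => ?_
      simp only [hu]
      ring
    have hnorm : ∀ s, ‖SC N a s‖ = t * ‖SC N u s‖ := by
      intro s
      rw [hSCu s, norm_div, Complex.norm_real, Real.norm_eq_abs, abs_of_pos htpos]
      field_simp
    have hσu : ∑ n ∈ range N, ‖u n‖ ^ 2 = 1 := by
      have : ∀ n ∈ range N, ‖u n‖ ^ 2 = ‖a n‖ ^ 2 / σ := by
        intro n _
        rw [hu, norm_div, Complex.norm_real, Real.norm_eq_abs, abs_of_pos htpos,
          div_pow, ht2]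
      rw [sum_congr rfl this, ← sum_div, ← hσ, div_self (ne_of_gt hσpos)]
    have hpt : ∀ s ∈ (range N).powerset,
        ‖SC N u s‖ ^ q ≤ 1 + ‖SC N u s‖ ^ (2 * k) := by
      intro s _
      rcases le_or_gt ‖SC N u s‖ 1 with h1 | h1
      · have := Real.rpow_le_one (norm_nonneg _) h1 hq
        have h2 : (0:ℝ) ≤ ‖SC N u s‖ ^ (2 * k) := by positivity
        linarith
      · have h2 : ‖SC N u s‖ ^ q ≤ ‖SC N u s‖ ^ ((2 * k : ℕ) : ℝ) := by
          refine Real.rpow_le_rpow_of_exponent_le (le_of_lt h1) ?_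
          push_cast; linarith
        rw [Real.rpow_natCast] at h2
        linarith
    have hsum : ∑ s ∈ (range N).powerset, ‖SC N u s‖ ^ q
        ≤ (1 + 2 ^ (k + 1) * 4 ^ (k ^ 2)) * 2 ^ N := by
      calc ∑ s ∈ (range N).powerset, ‖SC N u s‖ ^ q
          ≤ ∑ s ∈ (range N).powerset, (1 + ‖SC N u s‖ ^ (2 * k)) := sum_le_sum hpt
        _ = 2 ^ N + ∑ s ∈ (range N).powerset, ‖SC N u s‖ ^ (2 * k) := by
            rw [sum_add_distrib, sum_const, card_powerset, card_range]
            simp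
        _ ≤ 2 ^ N + 2 ^ (k + 1) * 4 ^ (k ^ 2) * 2 ^ N * 1 ^ k := by
            have := momentC N k u
            rw [hσu] at this
            linarith
        _ = (1 + 2 ^ (k + 1) * 4 ^ (k ^ 2)) * 2 ^ N := by ring
    have htq : t ^ q = σ ^ (q / 2) := by
      show Real.sqrt σ ^ q = σ ^ (q / 2)
      rw [Real.sqrt_eq_rpow, ← Real.rpow_mul hσ0]
      congr 1
      ring
    have hLHS : ∑ s ∈ (range N).powerset, ‖SC N a s‖ ^ q
        = σ ^ (q / 2) * ∑ s ∈ (range N).powerset, ‖SC N u s‖ ^ q := by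
      rw [mul_sum]
      refine sum_congr rfl fun s _ => ?_
      rw [hnorm s, Real.mul_rpow (le_of_lt htpos) (norm_nonneg _), htq]
    rw [hLHS]
    calc σ ^ (q / 2) * ∑ s ∈ (range N).powerset, ‖SC N u s‖ ^ q
        ≤ σ ^ (q / 2) * ((1 + 2 ^ (k + 1) * 4 ^ (k ^ 2)) * 2 ^ N) := by
          refine mul_le_mul_of_nonneg_left hsum (Real.rpow_nonneg hσ0 _)
      _ = (1 + 2 ^ (k + 1) * 4 ^ (k ^ 2)) * 2 ^ N * σ ^ (q / 2) := by ring

end KhAux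

namespace KhAux

/-- Pointwise Khintchine, lower bound. -/
lemma lower (N : ℕ) (a : ℕ → ℂ) (q : ℝ) (hq1 : 1 ≤ q) :
    2 ^ N * (∑ n ∈ range N, ‖a n‖ ^ 2) ^ (q / 2)
      ≤ 2049 * ∑ s ∈ (range N).powerset, ‖SC N a s‖ ^ q := by
  set σ := ∑ n ∈ range N, ‖a n‖ ^ 2 with hσ
  have hσ0 : (0:ℝ) ≤ σ := sum_nonneg fun n _ => sq_nonneg _
  have hsum0 : (0:ℝ) ≤ ∑ s ∈ (range N).powerset, ‖SC N a s‖ ^ q :=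
    sum_nonneg fun s _ => Real.rpow_nonneg (norm_nonneg _) _
  rcases le_or_gt q 4 with hq4 | hq4
  · -- Cauchy–Schwarz route, 1 ≤ q ≤ 4
    rcases eq_or_lt_of_le hσ0 with hσz | hσpos
    · rw [← hσz, Real.zero_rpow (by positivity : (q/2 : ℝ) ≠ 0), mul_zero]
      positivity
    · have hcs := sum_mul_sq_le_sq_mul_sq (range N).powerset
        (fun s => ‖SC N a s‖ ^ (q / 2)) (fun s => ‖SC N a s‖ ^ ((4 - q) / 2))
      have he1 : ∀ s ∈ (range N).powerset,
          ‖SC N a s‖ ^ (q / 2) * ‖SC N a s‖ ^ ((4 - q) / 2) = ‖SC N a s‖ ^ 2 := by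
        intro s _
        rw [← Real.rpow_add' (norm_nonneg _) (by rw [show q / 2 + (4 - q) / 2 = (2:ℝ) by ring]; norm_num),
          show q / 2 + (4 - q) / 2 = ((2:ℕ):ℝ) by push_cast; ring,
          Real.rpow_natCast]
      have he2 : ∀ s ∈ (range N).powerset,
          (‖SC N a s‖ ^ (q / 2)) ^ 2 = ‖SC N a s‖ ^ q := by
        intro s _
        rw [rpow_sq_comm (norm_nonneg _)]
        congr 1; ring
      have he3 : ∀ s ∈ (range N).powerset,
          (‖SC N a s‖ ^ ((4 - q) / 2)) ^ 2 = ‖SC N a s‖ ^ (4 - q) := by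
        intro s _
        rw [rpow_sq_comm (norm_nonneg _)]
        congr 1; ring
      rw [sum_congr rfl he1, sum_congr rfl he2, sum_congr rfl he3, orthC, ← hσ] at hcs
      -- bound the (4-q) moment using `upper` with k = 2
      have hup := upper N a (4 - q) (by linarith) 2 (by norm_num; linarith)
      rw [← hσ] at hup
      have hup' : ∑ s ∈ (range N).powerset, ‖SC N a s‖ ^ (4 - q)
          ≤ 2049 * 2 ^ N * σ ^ ((4 - q) / 2) := by
        calc ∑ s ∈ (range N).powerset, ‖SC N a s‖ ^ (4 - q)
            ≤ (1 + 2 ^ (2 + 1) * 4 ^ (2 ^ 2)) * 2 ^ N * σ ^ ((4 - q) / 2) := hup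
          _ = 2049 * 2 ^ N * σ ^ ((4 - q) / 2) := by norm_num
      -- combine
      have hσq : σ ^ (2:ℝ) = σ ^ (q / 2) * σ ^ ((4 - q) / 2) := by
        rw [← Real.rpow_add hσpos]
        congr 1; ring
      have hσ2 : (σ:ℝ) ^ 2 = σ ^ (2:ℝ) := by
        rw [← Real.rpow_natCast σ 2]; norm_num
      have hq2pos : (0:ℝ) < σ ^ ((4 - q) / 2) := Real.rpow_pos_of_pos hσpos _
      have h2N : (0:ℝ) < 2 ^ N := by positivity
      have hkey : ((2:ℝ) ^ N * σ) ^ 2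
          ≤ (∑ s ∈ (range N).powerset, ‖SC N a s‖ ^ q) * (2049 * 2 ^ N * σ ^ ((4 - q) / 2)) :=
        hcs.trans (mul_le_mul_of_nonneg_left hup' (sum_nonneg fun s _ =>
          Real.rpow_nonneg (norm_nonneg _) _))
      have hexp : ((2:ℝ) ^ N * σ) ^ 2
          = (2 ^ N * σ ^ (q / 2)) * (2 ^ N * σ ^ ((4 - q) / 2)) := by
        rw [mul_pow, hσ2, hσq]; ring
      rw [hexp] at hkey
      have hfin : (2 ^ N * σ ^ (q / 2)) * (2 ^ N * σ ^ ((4 - q) / 2))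
          ≤ (2049 * ∑ s ∈ (range N).powerset, ‖SC N a s‖ ^ q) * (2 ^ N * σ ^ ((4 - q) / 2)) := by
        calc (2 ^ N * σ ^ (q / 2)) * (2 ^ N * σ ^ ((4 - q) / 2)) ≤ _ := hkey
          _ = (2049 * ∑ s ∈ (range N).powerset, ‖SC N a s‖ ^ q) * (2 ^ N * σ ^ ((4 - q) / 2)) := by
            ring
      exact le_of_mul_le_mul_right hfin (by positivity)
  · -- Jensen route, q > 4 (so q / 2 ≥ 1)
    have hw : ∀ s ∈ (range N).powerset, (0:ℝ) ≤ ((2:ℝ) ^ N)⁻¹ := fun s _ => by positivity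
    have hw' : ∑ s ∈ (range N).powerset, ((2:ℝ) ^ N)⁻¹ = 1 := by
      rw [sum_const, card_powerset, card_range, nsmul_eq_mul]
      push_cast
      field_simp
    have hz : ∀ s ∈ (range N).powerset, (0:ℝ) ≤ ‖SC N a s‖ ^ 2 := fun s _ => sq_nonneg _
    have hj := Real.rpow_arith_mean_le_arith_mean_rpow (range N).powerset
      (fun _ => ((2:ℝ) ^ N)⁻¹) (fun s => ‖SC N a s‖ ^ 2) hw hw' hz
      (by linarith : (1:ℝ) ≤ q / 2)
    have hmean : ∑ s ∈ (range N).powerset, ((2:ℝ) ^ N)⁻¹ * ‖SC N a s‖ ^ 2 = σ := by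
      rw [← mul_sum, orthC, ← hσ]
      field_simp
    rw [hmean] at hj
    have hz2 : ∀ s ∈ (range N).powerset, (‖SC N a s‖ ^ 2 : ℝ) ^ (q / 2) = ‖SC N a s‖ ^ q := by
      intro s _
      rw [← Real.rpow_natCast ‖SC N a s‖ 2, ← Real.rpow_mul (norm_nonneg _)]
      congr 1
      push_cast; ring
    have hj2 : σ ^ (q / 2) ≤ ((2:ℝ) ^ N)⁻¹ * ∑ s ∈ (range N).powerset, ‖SC N a s‖ ^ q := by
      calc σ ^ (q / 2) ≤ ∑ s ∈ (range N).powerset, ((2:ℝ) ^ N)⁻¹ * (‖SC N a s‖ ^ 2 : ℝ) ^ (q / 2) := hj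
        _ = ((2:ℝ) ^ N)⁻¹ * ∑ s ∈ (range N).powerset, ‖SC N a s‖ ^ q := by
            rw [← mul_sum]
            congr 1
            exact sum_congr rfl hz2
    have h2N : (0:ℝ) < 2 ^ N := by positivity
    calc (2:ℝ) ^ N * σ ^ (q / 2)
        ≤ 2 ^ N * (((2:ℝ) ^ N)⁻¹ * ∑ s ∈ (range N).powerset, ‖SC N a s‖ ^ q) :=
          mul_le_mul_of_nonneg_left hj2 (le_of_lt h2N)
      _ = ∑ s ∈ (range N).powerset, ‖SC N a s‖ ^ q := by field_simp
      _ ≤ 2049 * ∑ s ∈ (range N).powerset, ‖SC N a s‖ ^ q := by nlinarith [hsum0]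

end KhAux

open MeasureTheory ENNReal

namespace KhAux

/-- coeFn of a finite weighted sum in Lp. -/
lemma Lp_coeFn_sum_smul {α : Type*} [MeasurableSpace α] {μ : Measure α} {p : ℝ≥0∞}
    {ι : Type*} (s : Finset ι) (c : ι → ℂ) (f : ι → Lp ℂ p μ) :
    ⇑(∑ i ∈ s, c i • f i) =ᵐ[μ] fun ω => ∑ i ∈ s, c i * f i ω := by
  classical
  induction s using Finset.induction with
  | empty => simp only [Finset.sum_empty]; exact Lp.coeFn_zero ℂ p μ
  | insert a t hni ih =>
    rw [Finset.sum_insert hni]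
    filter_upwards [Lp.coeFn_add (c a • f a) (∑ i ∈ t, c i • f i), ih,
      Lp.coeFn_smul (c a) (f a)] with ω h1 h2 h3
    rw [h1]
    simp only [Pi.add_apply, h2, h3, Pi.smul_apply, smul_eq_mul]
    rw [Finset.sum_insert hni]

end KhAux

open KhAux Finset in
/-- Commutative case of Lemma 1.4: every bounded operator on `L^p` extends to a bounded
operator on the `ℓ²`-valued space `L^p(X; ℓ²)`, with norm at most `C_p ‖T‖`. -/
theorem bounded_extension_square_function
    (p : ℝ≥0∞) [Fact (1 ≤ p)] (hp' : p ≠ ∞) :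
    ∃ Cp : ℝ, 0 < Cp ∧
      ∀ (X : Type) [MeasurableSpace X] (μ : Measure X)
        (T : Lp ℂ p μ →L[ℂ] Lp ℂ p μ)
        (N : ℕ) (x : ℕ → Lp ℂ p μ),
        eLpNorm
            (fun ω => (∑ m ∈ Finset.range N, ‖(T (x m)) ω‖ ^ 2 : ℝ) ^ (1 / 2 : ℝ)) p μ
          ≤ ENNReal.ofReal (Cp * ‖T‖) *
            eLpNorm
              (fun ω => (∑ m ∈ Finset.range N, ‖(x m) ω‖ ^ 2 : ℝ) ^ (1 / 2 : ℝ)) p μ := by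
  have hp1 : 1 ≤ p := Fact.out
  have hp0 : p ≠ 0 := by
    intro h; rw [h] at hp1; exact absurd hp1 (by simp)
  set pr := p.toReal with hprdef
  have hpr1 : 1 ≤ pr := by
    rw [hprdef, ← ENNReal.toReal_one]
    exact ENNReal.toReal_mono hp' hp1
  have hpr0 : 0 < pr := lt_of_lt_of_le one_pos hpr1
  set k : ℕ := ⌈pr⌉₊ with hk
  have hk2 : pr ≤ 2 * k := by
    have h1 : pr ≤ (k : ℝ) := Nat.le_ceil pr
    have h2 : (k:ℝ) ≤ 2 * k := by nlinarith [Nat.cast_nonneg (α := ℝ) k]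
    linarith
  set Bp : ℝ := 1 + 2 ^ (k + 1) * 4 ^ (k ^ 2) with hBp
  have hBp0 : 0 < Bp := by positivity
  refine ⟨max 1 ((2049 * Bp) ^ (1 / pr)), lt_of_lt_of_le one_pos (le_max_left _ _), ?_⟩
  intro X mX μ T N x
  set Cp : ℝ := max 1 ((2049 * Bp) ^ (1 / pr)) with hCp
  classical
  have hpr0' : (0:ℝ) ≤ pr := le_of_lt hpr0
  -- Step A : eLpNorm of square function as a lintegral
  have keyA : ∀ h : ℕ → X → ℂ,
      eLpNorm (fun ω => (∑ m ∈ range N, ‖h m ω‖ ^ 2 : ℝ) ^ (1 / 2 : ℝ)) p μ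
        = (∫⁻ ω, ENNReal.ofReal ((∑ m ∈ range N, ‖h m ω‖ ^ 2) ^ (pr / 2)) ∂μ) ^ (1 / pr) := by
    intro h
    rw [eLpNorm_eq_lintegral_rpow_enorm_toReal hp0 hp']
    congr 1
    refine lintegral_congr fun ω => ?_
    have h0 : (0:ℝ) ≤ ∑ m ∈ range N, ‖h m ω‖ ^ 2 := sum_nonneg fun m _ => sq_nonneg _
    have h1 : (0:ℝ) ≤ (∑ m ∈ range N, ‖h m ω‖ ^ 2) ^ (1 / 2 : ℝ) := Real.rpow_nonneg h0 _
    rw [← ofReal_norm, Real.norm_of_nonneg h1,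
      ENNReal.ofReal_rpow_of_nonneg h1 hpr0', ← Real.rpow_mul h0,
      show (1 / 2 : ℝ) * pr = pr / 2 by ring]
  -- a.e. measurability of the signed sums
  have hmeasY : ∀ (h : ℕ → X → ℂ), (∀ m, AEStronglyMeasurable (h m) μ) → ∀ s : Finset ℕ,
      AEMeasurable (fun ω => ENNReal.ofReal (‖∑ m ∈ range N, (sgn s m : ℂ) * h m ω‖ ^ pr)) μ := by
    intro h hh s
    have h1 : AEStronglyMeasurable (fun ω => ∑ m ∈ range N, (sgn s m : ℂ) * h m ω) μ :=
      Finset.aestronglyMeasurable_fun_sum _ fun m _ => (hh m).const_mul _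
    exact (h1.norm.aemeasurable.pow aemeasurable_const).ennreal_ofReal
  have h2Nne : ((2:ℝ≥0∞) ^ N) ≠ ∞ := by simp
  have h2Nne0 : ((2:ℝ≥0∞) ^ N) ≠ 0 := by positivity
  have h2Neq : ((2:ℝ≥0∞) ^ N) = ENNReal.ofReal ((2:ℝ) ^ N) := by
    rw [ENNReal.ofReal_pow (by norm_num)]
    norm_num
  -- Step B : integrated lower Khintchine
  have keyB : ∀ h : ℕ → X → ℂ, (∀ m, AEStronglyMeasurable (h m) μ) →
      (2:ℝ≥0∞) ^ N * (∫⁻ ω, ENNReal.ofReal ((∑ m ∈ range N, ‖h m ω‖ ^ 2) ^ (pr / 2)) ∂μ)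
        ≤ ENNReal.ofReal 2049 *
          ∑ s ∈ (range N).powerset,
            ∫⁻ ω, ENNReal.ofReal (‖∑ m ∈ range N, (sgn s m : ℂ) * h m ω‖ ^ pr) ∂μ := by
    intro h hh
    rw [← lintegral_const_mul' _ _ h2Nne,
      ← lintegral_finset_sum' _ (fun s _ => hmeasY h hh s),
      ← lintegral_const_mul' _ _ ENNReal.ofReal_ne_top]
    refine lintegral_mono fun ω => ?_
    have hlow := lower N (fun m => h m ω) pr hpr1
    simp only [SC] at hlow
    calc (2:ℝ≥0∞) ^ N * ENNReal.ofReal ((∑ m ∈ range N, ‖h m ω‖ ^ 2) ^ (pr / 2))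
        = ENNReal.ofReal ((2:ℝ) ^ N * (∑ m ∈ range N, ‖h m ω‖ ^ 2) ^ (pr / 2)) := by
          rw [ENNReal.ofReal_mul (by positivity), ← h2Neq]
      _ ≤ ENNReal.ofReal (2049 * ∑ s ∈ (range N).powerset,
            ‖∑ m ∈ range N, (sgn s m : ℂ) * h m ω‖ ^ pr) := ENNReal.ofReal_le_ofReal hlow
      _ = ENNReal.ofReal 2049 * ∑ s ∈ (range N).powerset,
            ENNReal.ofReal (‖∑ m ∈ range N, (sgn s m : ℂ) * h m ω‖ ^ pr) := by
          rw [ENNReal.ofReal_mul (by norm_num),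
            ENNReal.ofReal_sum_of_nonneg (fun s _ => Real.rpow_nonneg (norm_nonneg _) _)]
  -- Step C : integrated upper Khintchine
  have keyC : ∀ h : ℕ → X → ℂ, (∀ m, AEStronglyMeasurable (h m) μ) →
      (∑ s ∈ (range N).powerset,
          ∫⁻ ω, ENNReal.ofReal (‖∑ m ∈ range N, (sgn s m : ℂ) * h m ω‖ ^ pr) ∂μ)
        ≤ ENNReal.ofReal Bp * ((2:ℝ≥0∞) ^ N *
            ∫⁻ ω, ENNReal.ofReal ((∑ m ∈ range N, ‖h m ω‖ ^ 2) ^ (pr / 2)) ∂μ) := by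
    intro h hh
    rw [← lintegral_finset_sum' _ (fun s _ => hmeasY h hh s),
      ← lintegral_const_mul' _ _ h2Nne,
      ← lintegral_const_mul' _ _ ENNReal.ofReal_ne_top]
    refine lintegral_mono fun ω => ?_
    have hup := upper N (fun m => h m ω) pr hpr0' k hk2
    simp only [SC] at hup
    calc ∑ s ∈ (range N).powerset,
          ENNReal.ofReal (‖∑ m ∈ range N, (sgn s m : ℂ) * h m ω‖ ^ pr)
        = ENNReal.ofReal (∑ s ∈ (range N).powerset,
            ‖∑ m ∈ range N, (sgn s m : ℂ) * h m ω‖ ^ pr) := by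
          rw [ENNReal.ofReal_sum_of_nonneg (fun s _ => Real.rpow_nonneg (norm_nonneg _) _)]
      _ ≤ ENNReal.ofReal (Bp * ((2:ℝ) ^ N * (∑ m ∈ range N, ‖h m ω‖ ^ 2) ^ (pr / 2))) := by
          refine ENNReal.ofReal_le_ofReal ?_
          calc ∑ s ∈ (range N).powerset, ‖∑ m ∈ range N, (sgn s m : ℂ) * h m ω‖ ^ pr
              ≤ (1 + 2 ^ (k + 1) * 4 ^ (k ^ 2)) * 2 ^ N
                  * (∑ m ∈ range N, ‖h m ω‖ ^ 2) ^ (pr / 2) := hup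
            _ = Bp * ((2:ℝ) ^ N * (∑ m ∈ range N, ‖h m ω‖ ^ 2) ^ (pr / 2)) := by
                rw [hBp]; ring
      _ = ENNReal.ofReal Bp * ((2:ℝ≥0∞) ^ N
            * ENNReal.ofReal ((∑ m ∈ range N, ‖h m ω‖ ^ 2) ^ (pr / 2))) := by
          rw [ENNReal.ofReal_mul (le_of_lt hBp0), ENNReal.ofReal_mul (by positivity), ← h2Neq]
  -- lintegral of rpow of an Lp element
  have hInt : ∀ F : Lp ℂ p μ,
      ∫⁻ ω, ENNReal.ofReal (‖F ω‖ ^ pr) ∂μ = (eLpNorm (⇑F) p μ) ^ pr := by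
    intro F
    rw [eLpNorm_eq_lintegral_rpow_enorm_toReal hp0 hp', ← ENNReal.rpow_mul, one_div,
      inv_mul_cancel₀ (ne_of_gt hpr0), ENNReal.rpow_one]
    refine lintegral_congr fun ω => ?_
    rw [← ofReal_norm, ENNReal.ofReal_rpow_of_nonneg (norm_nonneg _) hpr0']
  -- operator norm bound on eLpNorm
  have hTn : ∀ y : Lp ℂ p μ,
      eLpNorm (⇑(T y)) p μ ≤ ENNReal.ofReal ‖T‖ * eLpNorm (⇑y) p μ := by
    intro y
    have h1 : ‖T y‖ ≤ ‖T‖ * ‖y‖ := T.le_opNorm y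
    rw [Lp.norm_def, Lp.norm_def] at h1
    have h2 := ENNReal.ofReal_le_ofReal h1
    rw [ENNReal.ofReal_toReal (Lp.eLpNorm_ne_top _), ENNReal.ofReal_mul (norm_nonneg T)] at h2
    exact h2.trans (mul_le_mul_right ENNReal.ofReal_toReal_le _)
  -- Step D : per-sign operator bound
  have keyD : ∀ s ∈ (range N).powerset,
      ∫⁻ ω, ENNReal.ofReal (‖∑ m ∈ range N, (sgn s m : ℂ) * (T (x m)) ω‖ ^ pr) ∂μ
        ≤ (ENNReal.ofReal ‖T‖) ^ pr *
            ∫⁻ ω, ENNReal.ofReal (‖∑ m ∈ range N, (sgn s m : ℂ) * (x m) ω‖ ^ pr) ∂μ := by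
    intro s _
    set y : Lp ℂ p μ := ∑ m ∈ range N, (sgn s m : ℂ) • x m with hy
    have hyc : ⇑y =ᵐ[μ] fun ω => ∑ m ∈ range N, (sgn s m : ℂ) * (x m) ω := by
      rw [hy]
      exact Lp_coeFn_sum_smul (range N) _ x
    have hTy : ⇑(T y) =ᵐ[μ] fun ω => ∑ m ∈ range N, (sgn s m : ℂ) * (T (x m)) ω := by
      have h1 : T y = ∑ m ∈ range N, (sgn s m : ℂ) • T (x m) := by
        rw [hy, map_sum]
        exact Finset.sum_congr rfl fun m _ => by rw [_root_.map_smul]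
      rw [h1]
      exact Lp_coeFn_sum_smul (range N) _ _
    calc ∫⁻ ω, ENNReal.ofReal (‖∑ m ∈ range N, (sgn s m : ℂ) * (T (x m)) ω‖ ^ pr) ∂μ
        = ∫⁻ ω, ENNReal.ofReal (‖(T y) ω‖ ^ pr) ∂μ := by
          refine lintegral_congr_ae ?_
          filter_upwards [hTy] with ω hω
          rw [hω]
      _ = (eLpNorm (⇑(T y)) p μ) ^ pr := hInt (T y)
      _ ≤ (ENNReal.ofReal ‖T‖ * eLpNorm (⇑y) p μ) ^ pr :=
          ENNReal.rpow_le_rpow (hTn y) hpr0'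
      _ = (ENNReal.ofReal ‖T‖) ^ pr * (eLpNorm (⇑y) p μ) ^ pr :=
          ENNReal.mul_rpow_of_nonneg _ _ hpr0'
      _ = (ENNReal.ofReal ‖T‖) ^ pr *
            ∫⁻ ω, ENNReal.ofReal (‖∑ m ∈ range N, (sgn s m : ℂ) * (x m) ω‖ ^ pr) ∂μ := by
          rw [← hInt y]
          congr 1
          refine lintegral_congr_ae ?_
          filter_upwards [hyc] with ω hω
          rw [hω]
  -- assemble
  have hfm : ∀ m, AEStronglyMeasurable (fun ω => (T (x m)) ω) μ :=
    fun m => Lp.aestronglyMeasurable _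
  have hgm : ∀ m, AEStronglyMeasurable (fun ω => (x m) ω) μ :=
    fun m => Lp.aestronglyMeasurable _
  have hB := keyB (fun m ω => (T (x m)) ω) hfm
  have hC := keyC (fun m ω => (x m) ω) hgm
  have hD : (∑ s ∈ (range N).powerset,
        ∫⁻ ω, ENNReal.ofReal (‖∑ m ∈ range N, (sgn s m : ℂ) * (T (x m)) ω‖ ^ pr) ∂μ)
      ≤ (ENNReal.ofReal ‖T‖) ^ pr *
          ∑ s ∈ (range N).powerset,
            ∫⁻ ω, ENNReal.ofReal (‖∑ m ∈ range N, (sgn s m : ℂ) * (x m) ω‖ ^ pr) ∂μ := by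
    rw [Finset.mul_sum]
    exact sum_le_sum keyD
  set If : ℝ≥0∞ :=
    ∫⁻ ω, ENNReal.ofReal ((∑ m ∈ range N, ‖(T (x m)) ω‖ ^ 2) ^ (pr / 2)) ∂μ with hIf
  set Ig : ℝ≥0∞ :=
    ∫⁻ ω, ENNReal.ofReal ((∑ m ∈ range N, ‖(x m) ω‖ ^ 2) ^ (pr / 2)) ∂μ with hIg
  have hchain : (2:ℝ≥0∞) ^ N * If
      ≤ (2:ℝ≥0∞) ^ N * ((ENNReal.ofReal 2049 * ENNReal.ofReal Bp
          * (ENNReal.ofReal ‖T‖) ^ pr) * Ig) := by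
    calc (2:ℝ≥0∞) ^ N * If ≤ ENNReal.ofReal 2049 *
          ∑ s ∈ (range N).powerset,
            ∫⁻ ω, ENNReal.ofReal (‖∑ m ∈ range N, (sgn s m : ℂ) * (T (x m)) ω‖ ^ pr) ∂μ := hB
      _ ≤ ENNReal.ofReal 2049 * ((ENNReal.ofReal ‖T‖) ^ pr *
            ∑ s ∈ (range N).powerset,
              ∫⁻ ω, ENNReal.ofReal (‖∑ m ∈ range N, (sgn s m : ℂ) * (x m) ω‖ ^ pr) ∂μ) :=
          mul_le_mul_right hD _
      _ ≤ ENNReal.ofReal 2049 * ((ENNReal.ofReal ‖T‖) ^ pr *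
            (ENNReal.ofReal Bp * ((2:ℝ≥0∞) ^ N * Ig))) :=
          mul_le_mul_right (mul_le_mul_right hC _) _
      _ = (2:ℝ≥0∞) ^ N * ((ENNReal.ofReal 2049 * ENNReal.ofReal Bp
            * (ENNReal.ofReal ‖T‖) ^ pr) * Ig) := by ring
  have hII : If ≤ (ENNReal.ofReal 2049 * ENNReal.ofReal Bp * (ENNReal.ofReal ‖T‖) ^ pr) * Ig :=
    (ENNReal.mul_le_mul_iff_right h2Nne0 h2Nne).1 hchain
  -- take pr-th roots
  have hroot : If ^ (1/pr) ≤ ENNReal.ofReal (Cp * ‖T‖) * Ig ^ (1/pr) := by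
    have h1 := ENNReal.rpow_le_rpow hII (by positivity : (0:ℝ) ≤ 1/pr)
    rw [ENNReal.mul_rpow_of_nonneg _ _ (by positivity : (0:ℝ) ≤ 1/pr),
      ENNReal.mul_rpow_of_nonneg _ _ (by positivity : (0:ℝ) ≤ 1/pr),
      ← ENNReal.ofReal_mul (by norm_num), ← ENNReal.rpow_mul,
      mul_one_div, div_self (ne_of_gt hpr0), ENNReal.rpow_one,
      ENNReal.ofReal_rpow_of_pos (by positivity)] at h1
    refine h1.trans ?_
    rw [ENNReal.ofReal_mul (le_of_lt (lt_of_lt_of_le one_pos (le_max_left _ _)))]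
    refine mul_le_mul_left (mul_le_mul_left ?_ _) _
    exact ENNReal.ofReal_le_ofReal (le_max_right _ _)
  calc eLpNorm (fun ω => (∑ m ∈ Finset.range N, ‖(T (x m)) ω‖ ^ 2 : ℝ) ^ (1 / 2 : ℝ)) p μ
      = If ^ (1/pr) := keyA (fun m ω => (T (x m)) ω)
    _ ≤ ENNReal.ofReal (Cp * ‖T‖) * Ig ^ (1/pr) := hroot
    _ = ENNReal.ofReal (Cp * ‖T‖) *
        eLpNorm (fun ω => (∑ m ∈ Finset.range N, ‖(x m) ω‖ ^ 2 : ℝ) ^ (1 / 2 : ℝ)) p μ := by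
        rw [keyA (fun m ω => (x m) ω)]
end

section
/- (Commutative case of Proposition 1.7, 2 ≤ p < ∞.) Let (X, μ) be a σ-finite measure space, 2 ≤ p < ∞, and let T : L^p(X, μ) → L^p(X, μ) be a linear isometry. Then for every N ∈ ℕ and every finite sequence x_1, …, x_N ∈ L^p(X, μ): ‖ ( ∑_{n=1}^{N} |T x_n|^2 )^{1/2} ‖_{L^p(X,μ)} = ‖ ( ∑_{n=1}^{N} |x_n|^2 )^{1/2} ‖_{L^p(X,μ)}. That is, T extends to an isometry of L^p(X; ℓ^2). -/
open MeasureTheory Finset ENNReal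

private noncomputable instance ebor (N : ℕ) : MeasurableSpace (EuclideanSpace ℂ (Fin N)) := borel _
private instance ebor2 (N : ℕ) : BorelSpace (EuclideanSpace ℂ (Fin N)) := ⟨rfl⟩

private lemma coord_meas {N : ℕ} (i : Fin N) :
    Measurable fun z : EuclideanSpace ℂ (Fin N) => z i :=
  (EuclideanSpace.proj (𝕜 := ℂ) i).continuous.measurable

private lemma key_rot {N : ℕ} (hN : 0 < N) {q : ℝ} (hq : 0 < q) (a : EuclideanSpace ℂ (Fin N)) :
    ∫⁻ z in Metric.ball (0 : EuclideanSpace ℂ (Fin N)) 1, (‖∑ n, a n * z n‖₊ : ℝ≥0∞) ^ q ∂volume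
      = (‖a‖₊ : ℝ≥0∞) ^ q *
        ∫⁻ z in Metric.ball (0 : EuclideanSpace ℂ (Fin N)) 1,
          (‖z ⟨0, hN⟩‖₊ : ℝ≥0∞) ^ q ∂volume := by
  by_cases ha : a = 0
  · subst ha
    simp [ENNReal.zero_rpow_of_pos hq]
  set i0 : Fin N := ⟨0, hN⟩
  -- the conjugate vector
  set c : EuclideanSpace ℂ (Fin N) := WithLp.toLp 2 (fun n => (starRingEnd ℂ) (a n)) with hc_def
  have hnc : ‖c‖ = ‖a‖ := by
    simp only [EuclideanSpace.norm_eq]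
    congr 1
    exact Finset.sum_congr rfl fun n _ => by simp [hc_def]
  have hc : c ≠ 0 := by
    intro h
    apply ha
    rw [← norm_eq_zero, ← hnc, h, norm_zero]
  set u : EuclideanSpace ℂ (Fin N) := (‖c‖ : ℂ)⁻¹ • c with hu_def
  have hcu : c = (‖c‖ : ℂ) • u := by
    rw [hu_def, smul_smul, mul_inv_cancel₀ (by
      simpa [Complex.ofReal_eq_zero] using norm_ne_zero_iff.2 hc), one_smul]
  have hu : ‖u‖ = 1 := by
    rw [hu_def, norm_smul, norm_inv, Complex.norm_real, norm_norm,
      inv_mul_cancel₀ (norm_ne_zero_iff.2 hc)]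
  -- an orthonormal basis with b i0 = u
  have hON : Orthonormal ℂ (({i0} : Set (Fin N)).restrict fun _ => u) := by
    constructor
    · intro i; exact hu
    · intro i j hij
      exact absurd (Subtype.ext (i.2.out.trans j.2.out.symm)) hij
  obtain ⟨b, hb⟩ := hON.exists_orthonormalBasis_extension_of_card_eq (by simp)
  have hbu : b i0 = u := hb i0 rfl
  -- the unitary
  set U : EuclideanSpace ℂ (Fin N) ≃ₗᵢ[ℂ] EuclideanSpace ℂ (Fin N) := b.repr with hU_def
  have hUc : U c = (‖c‖ : ℂ) • EuclideanSpace.single i0 (1 : ℂ) := by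
    conv_lhs => rw [hcu]
    rw [_root_.map_smul, hU_def, ← hbu, b.repr_self]
  -- inner product representation
  have hsum : ∀ z : EuclideanSpace ℂ (Fin N), (∑ n, a n * z n) = (inner ℂ c z : ℂ) := by
    intro z
    rw [PiLp.inner_apply]
    exact Finset.sum_congr rfl fun n _ => by simp [hc_def, RCLike.inner_apply, mul_comm]
  -- measure preserving realified unitary
  let U' : EuclideanSpace ℂ (Fin N) ≃ₗᵢ[ℝ] EuclideanSpace ℂ (Fin N) :=
    ⟨U.symm.toLinearEquiv.restrictScalars ℝ, U.symm.norm_map⟩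
  have hU' : ∀ w, U' w = U.symm w := fun _ => rfl
  have hUpres : MeasurePreserving U' volume volume := U'.measurePreserving
  have hUemb : MeasurableEmbedding U' := U'.toHomeomorph.measurableEmbedding
  have himg : U' '' Metric.ball (0 : EuclideanSpace ℂ (Fin N)) 1
      = Metric.ball (0 : EuclideanSpace ℂ (Fin N)) 1 := by
    ext w
    constructor
    · rintro ⟨z, hz, rfl⟩
      simpa [mem_ball_zero_iff, U'.norm_map] using (by simpa [mem_ball_zero_iff] using hz : ‖z‖ < 1)
    · intro hw
      exact ⟨U'.symm w, by simpa [mem_ball_zero_iff, U'.symm.norm_map] using hw, by simp⟩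
  have step : ∀ w : EuclideanSpace ℂ (Fin N),
      (‖(inner ℂ c (U' w) : ℂ)‖₊ : ℝ≥0∞) ^ q = (‖a‖₊ : ℝ≥0∞) ^ q * (‖w i0‖₊ : ℝ≥0∞) ^ q := by
    intro w
    have h1 : (inner ℂ c (U' w) : ℂ) = (‖c‖ : ℂ) * w i0 := by
      rw [hU', ← U.inner_map_map c (U.symm w), U.apply_symm_apply, hUc,
        inner_smul_left, EuclideanSpace.inner_single_left]
      simp
    rw [h1]
    have h2 : ‖(‖c‖ : ℂ) * w i0‖₊ = ‖a‖₊ * ‖w i0‖₊ := by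
      rw [nnnorm_mul]
      congr 1
      ext
      simp [hnc]
    rw [h2, ENNReal.coe_mul, ENNReal.mul_rpow_of_nonneg _ _ hq.le]
  simp only [hsum]
  calc ∫⁻ z in Metric.ball (0 : EuclideanSpace ℂ (Fin N)) 1, (‖(inner ℂ c z : ℂ)‖₊ : ℝ≥0∞) ^ q ∂volume
      = ∫⁻ w in Metric.ball (0 : EuclideanSpace ℂ (Fin N)) 1,
          (‖(inner ℂ c (U' w) : ℂ)‖₊ : ℝ≥0∞) ^ q ∂volume := by
        rw [hUpres.setLIntegral_comp_emb hUemb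
          (fun z => (‖(inner ℂ c z : ℂ)‖₊ : ℝ≥0∞) ^ q) (Metric.ball 0 1), himg]
    _ = ∫⁻ w in Metric.ball (0 : EuclideanSpace ℂ (Fin N)) 1,
          (‖a‖₊ : ℝ≥0∞) ^ q * (‖w i0‖₊ : ℝ≥0∞) ^ q ∂volume := by simp only [step]
    _ = (‖a‖₊ : ℝ≥0∞) ^ q * ∫⁻ z in Metric.ball (0 : EuclideanSpace ℂ (Fin N)) 1,
          (‖z i0‖₊ : ℝ≥0∞) ^ q ∂volume := lintegral_const_mul' _ _ (ENNReal.rpow_ne_top_of_nonneg hq.le ENNReal.coe_ne_top)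

private lemma kappa_ne_top {N : ℕ} (hN : 0 < N) {q : ℝ} (hq : 0 < q) :
    (∫⁻ z in Metric.ball (0 : EuclideanSpace ℂ (Fin N)) 1,
      (‖z ⟨0, hN⟩‖₊ : ℝ≥0∞) ^ q ∂volume) ≠ ∞ := by
  have hb : ∀ z ∈ Metric.ball (0 : EuclideanSpace ℂ (Fin N)) 1,
      (‖z ⟨0, hN⟩‖₊ : ℝ≥0∞) ^ q ≤ 1 := by
    intro z hz
    rw [mem_ball_zero_iff] at hz
    have h1 : ‖z ⟨0, hN⟩‖ ≤ ‖z‖ := by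
      have := norm_inner_le_norm (𝕜 := ℂ) (EuclideanSpace.single (⟨0, hN⟩ : Fin N) (1 : ℂ)) z
      simpa [EuclideanSpace.inner_single_left] using this
    have : (‖z ⟨0, hN⟩‖₊ : ℝ≥0∞) ≤ 1 := by
      rw [ENNReal.coe_le_one_iff, ← NNReal.coe_le_coe]
      exact (h1.trans hz.le).trans_eq (by simp)
    calc (‖z ⟨0, hN⟩‖₊ : ℝ≥0∞) ^ q ≤ (1 : ℝ≥0∞) ^ q := ENNReal.rpow_le_rpow this hq.le
      _ = 1 := ENNReal.one_rpow q
  refine ne_of_lt ?_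
  calc (∫⁻ z in Metric.ball (0 : EuclideanSpace ℂ (Fin N)) 1, (‖z ⟨0, hN⟩‖₊ : ℝ≥0∞) ^ q ∂volume)
      ≤ ∫⁻ _ in Metric.ball (0 : EuclideanSpace ℂ (Fin N)) 1, (1 : ℝ≥0∞) ∂volume :=
        setLIntegral_mono' measurableSet_ball hb
    _ = volume (Metric.ball (0 : EuclideanSpace ℂ (Fin N)) 1) := setLIntegral_one _
    _ < ∞ := measure_ball_lt_top

private lemma kappa_ne_zero {N : ℕ} (hN : 0 < N) {q : ℝ} (hq : 0 < q) :
    (∫⁻ z in Metric.ball (0 : EuclideanSpace ℂ (Fin N)) 1,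
      (‖z ⟨0, hN⟩‖₊ : ℝ≥0∞) ^ q ∂volume) ≠ 0 := by
  set i0 : Fin N := ⟨0, hN⟩
  intro h0
  have hfm : Measurable fun z : EuclideanSpace ℂ (Fin N) => (‖z i0‖₊ : ℝ≥0∞) ^ q :=
    ((coord_meas i0).nnnorm.coe_nnreal_ennreal).pow_const q
  rw [lintegral_eq_zero_iff' hfm.aemeasurable] at h0
  -- the set where z i0 ≠ 0 is null for the restricted measure
  have h1 : (volume.restrict (Metric.ball (0 : EuclideanSpace ℂ (Fin N)) 1))
      {z : EuclideanSpace ℂ (Fin N) | z i0 ≠ 0} = 0 := by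
    refine measure_mono_null ?_ h0
    intro z hz hz2
    simp only [Set.mem_setOf_eq, Pi.zero_apply] at hz hz2
    apply hz
    rw [ENNReal.rpow_eq_zero_iff] at hz2
    rcases hz2 with ⟨h, _⟩ | ⟨h, _⟩
    · exact absurd (by simpa using h) hz
    · exact absurd h ENNReal.coe_ne_top
  -- the set where z i0 = 0 is a proper submodule, hence null
  have h2 : volume {z : EuclideanSpace ℂ (Fin N) | z i0 = 0} = 0 := by
    have : {z : EuclideanSpace ℂ (Fin N) | z i0 = 0}
        = (Submodule.restrictScalars ℝ (LinearMap.ker (EuclideanSpace.proj (𝕜 := ℂ) i0 :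
            EuclideanSpace ℂ (Fin N) →L[ℂ] ℂ).toLinearMap) : Set (EuclideanSpace ℂ (Fin N))) := by
      ext z; simp [LinearMap.mem_ker]
    rw [this]
    apply Measure.addHaar_submodule
    intro htop
    have : EuclideanSpace.single i0 (1 : ℂ) ∈ Submodule.restrictScalars ℝ
        (LinearMap.ker (EuclideanSpace.proj (𝕜 := ℂ) i0 :
          EuclideanSpace ℂ (Fin N) →L[ℂ] ℂ).toLinearMap) := htop ▸ Submodule.mem_top
    simp [LinearMap.mem_ker] at this
  have h3 : volume (Metric.ball (0 : EuclideanSpace ℂ (Fin N)) 1) = 0 := by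
    have := measure_union_le (μ := volume.restrict (Metric.ball (0 : EuclideanSpace ℂ (Fin N)) 1))
      {z : EuclideanSpace ℂ (Fin N) | z i0 ≠ 0} {z : EuclideanSpace ℂ (Fin N) | z i0 = 0}
    have hcov : {z : EuclideanSpace ℂ (Fin N) | z i0 ≠ 0} ∪ {z | z i0 = 0} = Set.univ := by
      ext z; by_cases h : z i0 = 0 <;> simp [h]
    rw [hcov, h1, zero_add] at this
    have h2' : (volume.restrict (Metric.ball (0 : EuclideanSpace ℂ (Fin N)) 1))
        {z : EuclideanSpace ℂ (Fin N) | z i0 = 0} = 0 :=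
      le_antisymm ((Measure.restrict_apply_le _ _).trans h2.le) zero_le
    rw [h2'] at this
    simpa [Measure.restrict_apply_univ] using le_antisymm this zero_le
  exact absurd h3 (Metric.measure_ball_pos volume _ one_pos).ne'

private lemma enorm_euclidean {N : ℕ} (v : EuclideanSpace ℂ (Fin N)) {q : ℝ} (hq : 0 ≤ q) :
    (‖v‖₊ : ℝ≥0∞) ^ q = (∑ n, (‖v n‖₊ : ℝ≥0∞) ^ (2 : ℕ)) ^ (q / 2) := by
  have hS : (0:ℝ) ≤ ∑ n, ‖v n‖ ^ (2:ℕ) := Finset.sum_nonneg fun n _ => by positivity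
  have h1 : (‖v‖₊ : ℝ≥0∞) = ENNReal.ofReal (Real.sqrt (∑ n, ‖v n‖ ^ (2:ℕ))) := by
    rw [← EuclideanSpace.norm_eq, ofReal_norm, enorm_eq_nnnorm]
  have h2 : ENNReal.ofReal (∑ n, ‖v n‖ ^ (2:ℕ)) = ∑ n, (‖v n‖₊ : ℝ≥0∞) ^ (2:ℕ) := by
    rw [ENNReal.ofReal_sum_of_nonneg fun n _ => by positivity]
    exact Finset.sum_congr rfl fun n _ => by
      rw [ENNReal.ofReal_pow (norm_nonneg _), ofReal_norm, enorm_eq_nnnorm]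
  rw [h1, Real.sqrt_eq_rpow, ← ENNReal.ofReal_rpow_of_nonneg hS (by norm_num),
    ← ENNReal.rpow_mul, h2]
  congr 1
  ring

private lemma coeFn_lp_sum {X : Type*} [MeasurableSpace X] {μ : Measure X} {p : ℝ≥0∞}
    [Fact (1 ≤ p)] {ι : Type*} (s : Finset ι) (y : ι → Lp ℂ p μ) :
    ⇑(∑ i ∈ s, y i) =ᵐ[μ] fun ω => ∑ i ∈ s, y i ω := by
  classical
  induction s using Finset.induction_on with
  | empty => simp only [Finset.sum_empty]; exact Lp.coeFn_zero ℂ p μ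
  | insert a s hns ih =>
    rw [Finset.sum_insert hns]
    filter_upwards [Lp.coeFn_add (y a) (∑ i ∈ s, y i), ih] with ω h1 h2
    rw [h1]
    simp only [Pi.add_apply, h2, Finset.sum_insert hns]

private lemma main_phi {X : Type*} [MeasurableSpace X] (μ : Measure X) [SigmaFinite μ]
    (p : ℝ≥0∞) [Fact (1 ≤ p)] (hp0 : p ≠ 0) (hp' : p ≠ ∞) {N : ℕ} (hN : 0 < N)
    (y : Fin N → Lp ℂ p μ) :
    (∫⁻ z in Metric.ball (0 : EuclideanSpace ℂ (Fin N)) 1,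
        (‖z ⟨0, hN⟩‖₊ : ℝ≥0∞) ^ p.toReal ∂volume)
      * ∫⁻ ω, (∑ n, (‖(y n) ω‖₊ : ℝ≥0∞) ^ (2 : ℕ)) ^ (p.toReal / 2) ∂μ
      = ∫⁻ z in Metric.ball (0 : EuclideanSpace ℂ (Fin N)) 1,
          (eLpNorm (⇑(∑ n, z n • y n)) p μ) ^ p.toReal ∂volume := by
  set q := p.toReal with hq_def
  have hq : 0 < q := ENNReal.toReal_pos hp0 hp'
  -- pointwise (in z) identification of the inner L^p norm
  have hz : ∀ z : EuclideanSpace ℂ (Fin N),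
      (eLpNorm (⇑(∑ n, z n • y n)) p μ) ^ q
        = ∫⁻ ω, (‖∑ n, (y n) ω * z n‖₊ : ℝ≥0∞) ^ q ∂μ := by
    intro z
    have h2 : ∀ᵐ ω ∂μ, ∀ n : Fin N, (z n • y n) ω = z n * (y n) ω := by
      rw [ae_all_iff]
      intro n
      filter_upwards [Lp.coeFn_smul (z n) (y n)] with ω h
      rw [h, Pi.smul_apply, smul_eq_mul]
    have hae : ⇑(∑ n, z n • y n) =ᵐ[μ] fun ω => ∑ n, (y n) ω * z n := by
      filter_upwards [coeFn_lp_sum Finset.univ (fun n => z n • y n), h2] with ω h1 h2'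
      rw [h1]
      exact Finset.sum_congr rfl fun n _ => (h2' n).trans (mul_comm _ _)
    rw [eLpNorm_congr_ae hae, eLpNorm_eq_lintegral_rpow_enorm_toReal hp0 hp', one_div,
      ENNReal.rpow_inv_rpow hq.ne']
    rfl
  -- product measurability
  have hFm : Measurable (Function.uncurry fun (z : EuclideanSpace ℂ (Fin N)) (ω : X) =>
      (‖∑ n, (y n) ω * z n‖₊ : ℝ≥0∞) ^ q) := by
    have h1 : Measurable fun p : EuclideanSpace ℂ (Fin N) × X => ∑ n, (y n) p.2 * p.1 n :=
      Finset.measurable_sum _ fun n _ =>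
        (((Lp.stronglyMeasurable (y n)).measurable).comp measurable_snd).mul
          ((coord_meas n).comp measurable_fst)
    exact (h1.nnnorm.coe_nnreal_ennreal).pow_const q
  calc (∫⁻ z in Metric.ball (0 : EuclideanSpace ℂ (Fin N)) 1,
        (‖z ⟨0, hN⟩‖₊ : ℝ≥0∞) ^ q ∂volume)
      * ∫⁻ ω, (∑ n, (‖(y n) ω‖₊ : ℝ≥0∞) ^ (2 : ℕ)) ^ (q / 2) ∂μ
      = ∫⁻ ω, (∑ n, (‖(y n) ω‖₊ : ℝ≥0∞) ^ (2 : ℕ)) ^ (q / 2)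
          * (∫⁻ z in Metric.ball (0 : EuclideanSpace ℂ (Fin N)) 1,
              (‖z ⟨0, hN⟩‖₊ : ℝ≥0∞) ^ q ∂volume) ∂μ := by
        rw [lintegral_mul_const' _ _ (kappa_ne_top hN hq), mul_comm]
    _ = ∫⁻ ω, ∫⁻ z in Metric.ball (0 : EuclideanSpace ℂ (Fin N)) 1,
          (‖∑ n, (y n) ω * z n‖₊ : ℝ≥0∞) ^ q ∂volume ∂μ := by
        refine lintegral_congr fun ω => ?_
        rw [key_rot hN hq (WithLp.toLp 2 (fun n => (y n) ω) : EuclideanSpace ℂ (Fin N)),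
          enorm_euclidean _ hq.le]
    _ = ∫⁻ z in Metric.ball (0 : EuclideanSpace ℂ (Fin N)) 1,
          ∫⁻ ω, (‖∑ n, (y n) ω * z n‖₊ : ℝ≥0∞) ^ q ∂μ ∂volume :=
        (lintegral_lintegral_swap hFm.aemeasurable).symm
    _ = ∫⁻ z in Metric.ball (0 : EuclideanSpace ℂ (Fin N)) 1,
          (eLpNorm (⇑(∑ n, z n • y n)) p μ) ^ q ∂volume := by
        refine lintegral_congr fun z => (hz z).symm

private lemma eLpNorm_sq {X : Type*} [MeasurableSpace X] (μ : Measure X)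
    (p : ℝ≥0∞) [Fact (1 ≤ p)] (hp0 : p ≠ 0) (hp' : p ≠ ∞) (N : ℕ) (y : ℕ → Lp ℂ p μ) :
    eLpNorm (fun ω => (∑ m ∈ Finset.range N, ‖(y m) ω‖ ^ 2 : ℝ) ^ (1 / 2 : ℝ)) p μ
      = (∫⁻ ω, (∑ n : Fin N, (‖(y ↑n) ω‖₊ : ℝ≥0∞) ^ (2 : ℕ)) ^ (p.toReal / 2) ∂μ)
          ^ (1 / p.toReal) := by
  rw [eLpNorm_eq_lintegral_rpow_enorm_toReal hp0 hp']
  simp only [enorm_eq_nnnorm]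
  congr 1
  refine lintegral_congr fun ω => ?_
  have hS : (0:ℝ) ≤ ∑ m ∈ Finset.range N, ‖(y m) ω‖ ^ 2 :=
    Finset.sum_nonneg fun m _ => by positivity
  have h1 : ((‖(∑ m ∈ Finset.range N, ‖(y m) ω‖ ^ 2 : ℝ) ^ (1 / 2 : ℝ)‖₊ : ℝ≥0∞))
      = ENNReal.ofReal ((∑ m ∈ Finset.range N, ‖(y m) ω‖ ^ 2 : ℝ) ^ (1 / 2 : ℝ)) := by
    rw [← enorm_eq_nnnorm, ← ofReal_norm, Real.norm_of_nonneg (Real.rpow_nonneg hS _)]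
  have h2 : ENNReal.ofReal (∑ m ∈ Finset.range N, ‖(y m) ω‖ ^ 2 : ℝ)
      = ∑ n : Fin N, (‖(y ↑n) ω‖₊ : ℝ≥0∞) ^ (2 : ℕ) := by
    rw [ENNReal.ofReal_sum_of_nonneg fun m _ => by positivity,
      ← Fin.sum_univ_eq_sum_range (fun m => ENNReal.ofReal (‖(y m) ω‖ ^ 2)) N]
    exact Finset.sum_congr rfl fun n _ => by
      rw [ENNReal.ofReal_pow (norm_nonneg _), ofReal_norm, enorm_eq_nnnorm]
  rw [h1, ← ENNReal.ofReal_rpow_of_nonneg hS (by norm_num), ← ENNReal.rpow_mul, h2]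
  congr 1
  ring

/-- Commutative case of Proposition 1.7 for `2 ≤ p < ∞`: a linear isometry of `L^p`
extends to an isometry of the `ℓ²`-valued space `L^p(X; ℓ²)`. -/
theorem isometry_extension_square_function
    {X : Type*} [MeasurableSpace X] (μ : Measure X) [SigmaFinite μ]
    (p : ℝ≥0∞) [Fact (1 ≤ p)] (hp : 2 ≤ p) (hp' : p ≠ ∞)
    (T : Lp ℂ p μ →L[ℂ] Lp ℂ p μ) (hT : ∀ x : Lp ℂ p μ, ‖T x‖ = ‖x‖)
    (N : ℕ) (x : ℕ → Lp ℂ p μ) :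
    eLpNorm (fun ω => (∑ m ∈ Finset.range N, ‖(T (x m)) ω‖ ^ 2 : ℝ) ^ (1 / 2 : ℝ)) p μ
      = eLpNorm (fun ω => (∑ m ∈ Finset.range N, ‖(x m) ω‖ ^ 2 : ℝ) ^ (1 / 2 : ℝ)) p μ := by
  rcases Nat.eq_zero_or_pos N with hN | hN
  · subst hN
    simp [Real.zero_rpow (by norm_num : (1:ℝ)/2 ≠ 0)]
  have hp0 : p ≠ 0 := (lt_of_lt_of_le (by norm_num) hp).ne'
  have hq : 0 < p.toReal := ENNReal.toReal_pos hp0 hp'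
  have hmain := main_phi μ p hp0 hp' hN (fun n : Fin N => x ↑n)
  have hmainT := main_phi μ p hp0 hp' hN (fun n : Fin N => T (x ↑n))
  have hRHS : (∫⁻ z in Metric.ball (0 : EuclideanSpace ℂ (Fin N)) 1,
        (eLpNorm (⇑(∑ n : Fin N, z n • T (x ↑n))) p μ) ^ p.toReal ∂volume)
      = ∫⁻ z in Metric.ball (0 : EuclideanSpace ℂ (Fin N)) 1,
        (eLpNorm (⇑(∑ n : Fin N, z n • x ↑n)) p μ) ^ p.toReal ∂volume := by
    refine lintegral_congr fun z => ?_
    have hTs : (∑ n : Fin N, z n • T (x ↑n)) = T (∑ n : Fin N, z n • x ↑n) := by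
      rw [map_sum]
      exact Finset.sum_congr rfl fun n _ => (T.map_smul _ _).symm
    rw [hTs]
    have hnorm := hT (∑ n : Fin N, z n • x ↑n)
    rw [Lp.norm_def, Lp.norm_def] at hnorm
    rw [(ENNReal.toReal_eq_toReal_iff' (Lp.eLpNorm_ne_top _) (Lp.eLpNorm_ne_top _)).mp hnorm]
  have hPhi : (∫⁻ ω, (∑ n : Fin N, (‖(T (x ↑n)) ω‖₊ : ℝ≥0∞) ^ (2 : ℕ)) ^ (p.toReal / 2) ∂μ)
      = ∫⁻ ω, (∑ n : Fin N, (‖(x ↑n) ω‖₊ : ℝ≥0∞) ^ (2 : ℕ)) ^ (p.toReal / 2) ∂μ := by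
    refine (ENNReal.mul_right_inj (kappa_ne_zero hN hq) (kappa_ne_top hN hq)).mp ?_
    rw [hmain, hmainT, hRHS]
  rw [eLpNorm_sq μ p hp0 hp' N (fun m => T (x m)), eLpNorm_sq μ p hp0 hp' N x, hPhi]
end
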